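/- arXiv:1202.2304 — 7 statements merged into one kernel-verified Lean document; each statement's English description precedes it below -/
import Mathlib

section
/- Let p be an odd prime. Then the Platonic graph Π_p is p-vertex-connected: for every set S of vertices of Π_p with |S| < p, the induced subgraph of Π_p on the complement of S is connected (and nonempty). Since Π_p is p-regular, p is the maximal possible vertex connectivity. -/
/-- Pairs `(λ, μ) ∈ (ℤ/N)²` with `gcd(λ, μ, N) = 1`. -/
abbrev PlatonicPair (N : ℕ) : Type :=
  {x : ZMod N × ZMod N // Nat.gcd (Nat.gcd x.1.val x.2.val) N = 1}

/-- Identify `(λ,μ)` with `(-λ,-μ)`. -/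
instance platonicSetoid (N : ℕ) : Setoid (PlatonicPair N) where
  r x y := y.val = x.val ∨ y.val = -x.val
  iseqv := by
    refine ⟨fun _ => Or.inl rfl, ?_, ?_⟩
    · rintro x y (h | h)
      · exact Or.inl h.symm
      · right; rw [h, neg_neg]
    · rintro x y z (h1 | h1) (h2 | h2)
      · exact Or.inl (h2.trans h1)
      · right; rw [h2, h1]
      · right; rw [h2, h1]
      · left; rw [h2, h1, neg_neg]

/-- Vertices of the Platonic graph: classes `[λ,μ] = {(λ,μ), (-λ,-μ)}`. -/
abbrev PlatonicVertex (N : ℕ) : Type := Quotient (platonicSetoid N)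

/-- The Platonic graph `Π_N`: distinct classes `[λ,μ]`, `[ν,ω]` are adjacent
iff `λω - μν = ±1` in `ℤ/N`. -/
def Platonic (N : ℕ) : SimpleGraph (PlatonicVertex N) where
  Adj a b := a ≠ b ∧ ∃ x y : PlatonicPair N, ⟦x⟧ = a ∧ ⟦y⟧ = b ∧
    (x.val.1 * y.val.2 - x.val.2 * y.val.1 = 1 ∨
     x.val.1 * y.val.2 - x.val.2 * y.val.1 = -1)
  symm := ⟨by
    rintro a b ⟨hne, x, y, hx, hy, hdet⟩
    refine ⟨hne.symm, y, x, hy, hx, ?_⟩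
    rcases hdet with h | h
    · right; linear_combination -h
    · left; linear_combination -h⟩
  loopless := ⟨fun a h => h.1 rfl⟩

instance platonicDecRel (N : ℕ) :
    DecidableRel (α := PlatonicPair N) (· ≈ ·) := fun x y =>
  inferInstanceAs (Decidable (y.val = x.val ∨ y.val = -x.val))

instance (N : ℕ) : DecidableEq (PlatonicVertex N) :=
  @Quotient.decidableEq _ _ (platonicDecRel N)

instance (N : ℕ) [NeZero N] : Fintype (PlatonicVertex N) :=
  Quotient.fintype _

instance platonicAdjDec (N : ℕ) [NeZero N] : DecidableRel (Platonic N).Adj := fun a b =>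
  inferInstanceAs (Decidable (a ≠ b ∧ ∃ x y : PlatonicPair N, ⟦x⟧ = a ∧ ⟦y⟧ = b ∧
    (x.val.1 * y.val.2 - x.val.2 * y.val.1 = 1 ∨
     x.val.1 * y.val.2 - x.val.2 * y.val.1 = -1)))

/-- The class of `(λ,μ)` has nonvanishing second coordinate. -/
def secondNZ (N : ℕ) (v : PlatonicVertex N) : Prop :=
  ∀ x : PlatonicPair N, ⟦x⟧ = v → x.val.2 ≠ 0

instance (N : ℕ) [NeZero N] : DecidablePred (secondNZ N) := fun _ =>
  Fintype.decidableForallFintype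

/-- The modified Platonic graph `Π_p'`: induced subgraph of `Π_p` on the classes
`[λ,μ]` with `μ ≠ 0`. -/
def ModPlatonic (N : ℕ) : SimpleGraph {v : PlatonicVertex N | secondNZ N v} :=
  SimpleGraph.induce {v : PlatonicVertex N | secondNZ N v} (Platonic N)

instance (N : ℕ) [NeZero N] : DecidableRel (ModPlatonic N).Adj := fun a b =>
  inferInstanceAs (Decidable ((Platonic N).Adj a b))

namespace PlatonicAux

variable {p : ℕ}

def det2 (x y : ZMod p × ZMod p) : ZMod p := x.1 * y.2 - x.2 * y.1

lemma pair_ne_zero (hp : p.Prime) (x : PlatonicPair p) : x.val ≠ 0 := by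
  intro h
  have h1 : x.val.1.val = 0 := by rw [h]; simp [ZMod.val_zero]
  have h2 : x.val.2.val = 0 := by rw [h]; simp [ZMod.val_zero]
  have := x.property
  rw [h1, h2] at this
  simp at this
  exact hp.one_lt.ne' this

lemma gcd_aux (hp : p.Prime) {x : ZMod p × ZMod p} (hx : x ≠ 0) :
    Nat.gcd (Nat.gcd x.1.val x.2.val) p = 1 := by
  haveI : NeZero p := ⟨hp.ne_zero⟩
  rcases hp.eq_one_or_self_of_dvd _ (Nat.gcd_dvd_right (Nat.gcd x.1.val x.2.val) p) with h | h
  · exact h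
  · exfalso
    have hg : p ∣ Nat.gcd x.1.val x.2.val := by
      have := Nat.gcd_dvd_left (Nat.gcd x.1.val x.2.val) p
      rwa [h] at this
    have h1 : x.1.val = 0 :=
      Nat.eq_zero_of_dvd_of_lt (hg.trans (Nat.gcd_dvd_left _ _)) (ZMod.val_lt x.1)
    have h2 : x.2.val = 0 :=
      Nat.eq_zero_of_dvd_of_lt (hg.trans (Nat.gcd_dvd_right _ _)) (ZMod.val_lt x.2)
    exact hx (Prod.ext_iff.mpr ⟨(ZMod.val_eq_zero x.1).mp h1, (ZMod.val_eq_zero x.2).mp h2⟩)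

/-- build a vertex from a nonzero pair -/
def mkV (hp : p.Prime) (x : ZMod p × ZMod p) (hx : x ≠ 0) : PlatonicVertex p :=
  ⟦⟨x, gcd_aux hp hx⟩⟧

lemma mkV_eq_iff (hp : p.Prime) {x y : ZMod p × ZMod p} {hx : x ≠ 0} {hy : y ≠ 0} :
    mkV hp x hx = mkV hp y hy ↔ (y = x ∨ y = -x) := by
  constructor
  · intro h
    exact Quotient.exact h
  · intro h
    exact Quotient.sound h

lemma adj_mkV (hp : p.Prime) {x y : ZMod p × ZMod p} (hx : x ≠ 0) (hy : y ≠ 0)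
    (h : det2 x y = 1 ∨ det2 x y = -1) :
    (Platonic p).Adj (mkV hp x hx) (mkV hp y hy) := by
  haveI : Fact p.Prime := ⟨hp⟩
  have hne : mkV hp x hx ≠ mkV hp y hy := by
    intro hEq
    have h0 : det2 x y = 0 := by
      rcases (mkV_eq_iff hp).mp hEq with h' | h' <;> subst h' <;> simp [det2] <;> ring
    rcases h with h | h <;> rw [h0] at h
    · exact one_ne_zero (α := ZMod p) h.symm
    · exact one_ne_zero (α := ZMod p) (neg_eq_zero.mp h.symm)
  show mkV hp x hx ≠ mkV hp y hy ∧ _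
  exact ⟨hne, ⟨x, gcd_aux hp hx⟩, ⟨y, gcd_aux hp hy⟩, rfl, rfl, h⟩

/-- slope of a nonzero pair -/
def line0 (x : ZMod p × ZMod p) : Option (ZMod p) :=
  if x.1 = 0 then none else some (x.2 * x.1⁻¹)

lemma line0_neg (hp : p.Prime) (x : ZMod p × ZMod p) : line0 (-x) = line0 x := by
  haveI : Fact p.Prime := ⟨hp⟩
  unfold line0
  rcases eq_or_ne x.1 0 with h | h
  · simp [h]
  · rw [if_neg h, if_neg (by simpa using h)]
    congr 1
    show -x.2 * (-x.1)⁻¹ = x.2 * x.1⁻¹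
    rw [inv_neg]
    ring

def lineV (hp : p.Prime) : PlatonicVertex p → Option (ZMod p) :=
  Quotient.lift (fun x : PlatonicPair p => line0 x.val) (by
    rintro a b (h | h)
    · show line0 a.val = line0 b.val
      rw [h]
    · show line0 a.val = line0 b.val
      rw [h, line0_neg hp])

def gen : Option (ZMod p) → ZMod p × ZMod p
  | none => (0, 1)
  | some c => (1, c)

def cogen : Option (ZMod p) → ZMod p × ZMod p
  | none => (-1, 0)
  | some _ => (0, 1)

lemma det_gen_cogen (c : Option (ZMod p)) :
    (gen c).1 * (cogen c).2 - (gen c).2 * (cogen c).1 = 1 := by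
  cases c <;> simp [gen, cogen]

/-- coordinates with respect to the basis (gen c, cogen c) -/
def vec (c : Option (ZMod p)) (s t : ZMod p) : ZMod p × ZMod p :=
  (s * (gen c).1 + t * (cogen c).1, s * (gen c).2 + t * (cogen c).2)

lemma det_vec (c : Option (ZMod p)) (s t s' t' : ZMod p) :
    det2 (vec c s t) (vec c s' t') = s * t' - t * s' := by
  have hD := det_gen_cogen c
  simp only [det2, vec]
  linear_combination (s * t' - t * s') * hD

lemma vec_inj {c : Option (ZMod p)} {s t s' t' : ZMod p} (h : vec c s t = vec c s' t') :
    s = s' ∧ t = t' := by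
  constructor
  · have h1 := det_vec c s t 0 1
    rw [h, det_vec] at h1
    linear_combination -h1
  · have h1 := det_vec c 1 0 s t
    rw [show vec c s t = vec c s' t' from h, det_vec] at h1
    linear_combination -h1

lemma vec_zero (c : Option (ZMod p)) : vec c 0 0 = 0 := by
  simp [vec]

lemma vec_eq_zero {c : Option (ZMod p)} {s t : ZMod p} (h : vec c s t = 0) :
    s = 0 ∧ t = 0 := vec_inj (by rw [h, vec_zero])

lemma neg_vec (c : Option (ZMod p)) (s t : ZMod p) : -vec c s t = vec c (-s) (-t) := by
  unfold vec
  rw [Prod.neg_mk]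
  exact Prod.ext_iff.mpr ⟨by ring, by ring⟩

lemma line0_vec (hp : p.Prime) {a : ZMod p} (ha : a ≠ 0) (c : Option (ZMod p)) :
    line0 (vec c a 0) = c := by
  haveI : Fact p.Prime := ⟨hp⟩
  cases c with
  | none =>
    show line0 (a * 0 + 0 * (-1), a * 1 + 0 * 0) = none
    unfold line0
    simp
  | some c =>
    show line0 (a * 1 + 0 * 0, a * c + 0 * 1) = some c
    unfold line0
    rw [if_neg (by simpa using ha)]
    congr 1
    simp only [mul_one, mul_zero, zero_mul, add_zero]
    rw [mul_comm a c, mul_assoc, mul_inv_cancel₀ ha, mul_one]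

lemma line0_of_det (hp : p.Prime) {x : ZMod p × ZMod p} (hx : x ≠ 0) {c : Option (ZMod p)}
    (h : det2 x (gen c) = 0) : line0 x = c := by
  haveI : Fact p.Prime := ⟨hp⟩
  cases c with
  | none =>
    have h1 : x.1 = 0 := by
      have : x.1 * 1 - x.2 * 0 = 0 := h
      simpa using this
    simp [line0, h1]
  | some c =>
    have h1 : x.1 * c - x.2 * 1 = 0 := h
    have hx1 : x.1 ≠ 0 := by
      intro h0
      apply hx
      have hx2 : x.2 = 0 := by
        rw [h0] at h1
        linear_combination -h1
      exact Prod.ext_iff.mpr ⟨h0, hx2⟩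
    unfold line0
    rw [if_neg hx1]
    congr 1
    have hx2 : x.2 = x.1 * c := by linear_combination -h1
    rw [hx2]
    field_simp

lemma line0_rep (hp : p.Prime) {x : ZMod p × ZMod p} (hx : x ≠ 0) {c : Option (ZMod p)}
    (h : line0 x = c) : ∃ a, a ≠ 0 ∧ x = vec c a 0 := by
  haveI : Fact p.Prime := ⟨hp⟩
  unfold line0 at h
  by_cases h1 : x.1 = 0
  · rw [if_pos h1] at h
    subst h
    refine ⟨x.2, ?_, ?_⟩
    · intro h2
      exact hx (Prod.ext_iff.mpr ⟨h1, h2⟩)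
    · show x = (x.2 * 0 + 0 * (-1), x.2 * 1 + 0 * 0)
      refine Prod.ext_iff.mpr ⟨?_, ?_⟩ <;> simp [h1]
  · rw [if_neg h1] at h
    subst h
    refine ⟨x.1, h1, ?_⟩
    show x = (x.1 * 1 + 0 * 0, x.1 * (x.2 * x.1⁻¹) + 0 * 1)
    refine Prod.ext_iff.mpr ⟨by ring, ?_⟩
    field_simp
    ring


lemma two_ne_zero' (hp : p.Prime) (hodd : Odd p) : (2 : ZMod p) ≠ 0 := by
  haveI : NeZero p := ⟨hp.ne_zero⟩
  intro h
  rw [show ((2 : ZMod p)) = ((2 : ℕ) : ZMod p) by norm_num] at h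
  have hd := (ZMod.natCast_eq_zero_iff 2 p).mp h
  have h2 := (Nat.prime_dvd_prime_iff_eq hp Nat.prime_two).mp hd
  rw [h2] at hodd
  simp [Nat.odd_iff] at hodd

lemma ne_neg_self (hp : p.Prime) (hodd : Odd p) {a : ZMod p} (ha : a ≠ 0) : a ≠ -a := by
  haveI : Fact p.Prime := ⟨hp⟩
  intro h
  have h2 : (2 : ZMod p) * a = 0 := by linear_combination h
  rcases mul_eq_zero.mp h2 with h' | h'
  · exact two_ne_zero' hp hodd h'
  · exact ha h'

lemma vec_ne_zero_left {c : Option (ZMod p)} {a : ZMod p} (ha : a ≠ 0) :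
    vec c a 0 ≠ 0 := fun h0 => ha (vec_eq_zero h0).1

lemma vec_ne_zero_right {c : Option (ZMod p)} {s t : ZMod p} (ht : t ≠ 0) :
    vec c s t ≠ 0 := fun h0 => ht (vec_eq_zero h0).2

lemma det2_vec_right (x : ZMod p × ZMod p) (c : Option (ZMod p)) (a : ZMod p) :
    det2 x (vec c a 0) = a * det2 x (gen c) := by
  simp only [det2, vec]
  ring

lemma mkV_vec_cases (hp : p.Prime) {c : Option (ZMod p)} {s t s' t' : ZMod p}
    {h1 : vec c s t ≠ 0} {h2 : vec c s' t' ≠ 0}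
    (h : mkV hp (vec c s t) h1 = mkV hp (vec c s' t') h2) :
    (s' = s ∧ t' = t) ∨ (s' = -s ∧ t' = -t) := by
  rcases (mkV_eq_iff hp).mp h with h' | h'
  · exact Or.inl (vec_inj h')
  · rw [neg_vec] at h'
    exact Or.inr (vec_inj h')

lemma neighbor_on_line (hp : p.Prime) (c : Option (ZMod p)) (v : PlatonicVertex p)
    (hv : lineV hp v ≠ c) :
    ∃ w, lineV hp w = c ∧ (Platonic p).Adj v w := by
  haveI : Fact p.Prime := ⟨hp⟩
  obtain ⟨x, rfl⟩ := Quotient.exists_rep v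
  have hx0 : x.val ≠ 0 := pair_ne_zero hp x
  have hdne : det2 x.val (gen c) ≠ 0 := fun h0 => hv (line0_of_det hp hx0 h0)
  refine ⟨mkV hp (vec c (det2 x.val (gen c))⁻¹ 0) (vec_ne_zero_left (inv_ne_zero hdne)), ?_, ?_⟩
  · exact line0_vec hp (inv_ne_zero hdne) c
  · have hv_eq : (⟦x⟧ : PlatonicVertex p) = mkV hp x.val hx0 := by
      apply Quotient.sound
      exact Or.inl rfl
    rw [hv_eq]
    apply adj_mkV
    left
    rw [det2_vec_right]
    exact inv_mul_cancel₀ hdne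

lemma gen_eq_vec (c : Option (ZMod p)) : gen c = vec c 1 0 := by
  refine Prod.ext_iff.mpr ⟨by simp [vec], by simp [vec]⟩

lemma gen_ne_zero (hp : p.Prime) (c : Option (ZMod p)) : (gen c : ZMod p × ZMod p) ≠ 0 := by
  haveI : Fact p.Prime := ⟨hp⟩
  rw [gen_eq_vec]
  exact vec_ne_zero_left one_ne_zero

lemma line0_gen (hp : p.Prime) (c : Option (ZMod p)) :
    lineV hp (mkV hp (gen c) (gen_ne_zero hp c)) = c := by
  haveI : Fact p.Prime := ⟨hp⟩
  show line0 (gen c) = c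
  rw [gen_eq_vec]
  exact line0_vec hp one_ne_zero c

lemma line_reach (hp : p.Prime) (hodd : Odd p) (S : Finset (PlatonicVertex p))
    (hS : S.card < p) (c : Option (ZMod p))
    (hlineS : ∀ v : PlatonicVertex p, lineV hp v = c → v ∉ S)
    {u w : PlatonicVertex p} (hu : lineV hp u = c) (hw : lineV hp w = c) :
    (SimpleGraph.induce {v : PlatonicVertex p | v ∉ S} (Platonic p)).Reachable
      ⟨u, hlineS u hu⟩ ⟨w, hlineS w hw⟩ := by
  haveI : Fact p.Prime := ⟨hp⟩
  haveI : NeZero p := ⟨hp.ne_zero⟩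
  classical
  by_cases huw : u = w
  · subst huw
    exact SimpleGraph.Reachable.refl _
  obtain ⟨xu, rfl⟩ := Quotient.exists_rep u
  obtain ⟨xw, rfl⟩ := Quotient.exists_rep w
  obtain ⟨a, ha, hxa⟩ := line0_rep hp (pair_ne_zero hp xu) hu
  obtain ⟨b, hb, hxb⟩ := line0_rep hp (pair_ne_zero hp xw) hw
  have hu_eq : (⟦xu⟧ : PlatonicVertex p) = mkV hp (vec c a 0) (vec_ne_zero_left ha) :=
    Quotient.sound (Or.inl hxa.symm)
  have hw_eq : (⟦xw⟧ : PlatonicVertex p) = mkV hp (vec c b 0) (vec_ne_zero_left hb) :=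
    Quotient.sound (Or.inl hxb.symm)
  have hba : b ≠ a ∧ b ≠ -a := by
    constructor
    · intro h
      subst h
      exact huw (hu_eq.trans hw_eq.symm)
    · intro h
      apply huw
      rw [hu_eq, hw_eq]
      apply (mkV_eq_iff hp).mpr
      right
      rw [neg_vec, h]
      simp
  -- the two families of intermediate vertices
  set X : ZMod p → PlatonicVertex p :=
    fun ν => mkV hp (vec c ν a⁻¹) (vec_ne_zero_right (inv_ne_zero ha)) with hX_def
  set Y : ZMod p → PlatonicVertex p :=
    fun ν => mkV hp (vec c (a * (ν * b⁻¹ - 1)) b⁻¹) (vec_ne_zero_right (inv_ne_zero hb)) with hY_def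
  have hXinj : ∀ ν μ, X ν = X μ → ν = μ := by
    intro ν μ h
    rcases mkV_vec_cases hp h with ⟨h1, _⟩ | ⟨_, h2⟩
    · exact h1.symm
    · exact absurd h2 (ne_neg_self hp hodd (inv_ne_zero ha))
  have hYinj : ∀ ν μ, Y ν = Y μ → ν = μ := by
    intro ν μ h
    rcases mkV_vec_cases hp h with ⟨h1, _⟩ | ⟨_, h2⟩
    · have h3 := mul_left_cancel₀ ha h1.symm
      have h4 : ν * b⁻¹ = μ * b⁻¹ := by linear_combination h3
      exact mul_right_cancel₀ (inv_ne_zero hb) h4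
    · exact absurd h2 (ne_neg_self hp hodd (inv_ne_zero hb))
  have hXY : ∀ ν μ, X ν ≠ Y μ := by
    intro ν μ h
    rcases mkV_vec_cases hp h with ⟨_, h2⟩ | ⟨_, h2⟩
    · exact hba.1 (inv_injective h2)
    · apply hba.2
      have : b⁻¹ = (-a)⁻¹ := by rw [inv_neg]; linear_combination h2
      exact inv_injective this
  have hex : ∃ ν : ZMod p, X ν ∉ S ∧ Y ν ∉ S := by
    by_contra hcon
    push_neg at hcon
    have hginj : Function.Injective
        (fun ν : ZMod p => if h : X ν ∈ S then (⟨X ν, h⟩ : {v // v ∈ S}) else ⟨Y ν, hcon ν h⟩) := by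
      intro ν μ hEq
      dsimp only at hEq
      by_cases h1 : X ν ∈ S <;> by_cases h2 : X μ ∈ S
      · rw [dif_pos h1, dif_pos h2] at hEq
        exact hXinj _ _ (Subtype.ext_iff.mp hEq)
      · rw [dif_pos h1, dif_neg h2] at hEq
        exact absurd (Subtype.ext_iff.mp hEq) (hXY _ _)
      · rw [dif_neg h1, dif_pos h2] at hEq
        exact absurd (Subtype.ext_iff.mp hEq).symm (hXY _ _)
      · rw [dif_neg h1, dif_neg h2] at hEq
        exact hYinj _ _ (Subtype.ext_iff.mp hEq)
    have hcard := Fintype.card_le_of_injective _ hginj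
    rw [ZMod.card, Fintype.card_coe] at hcard
    omega
  obtain ⟨ν, hXν, hYν⟩ := hex
  -- adjacency facts
  have adj1 : (Platonic p).Adj (⟦xu⟧ : PlatonicVertex p) (X ν) := by
    rw [hu_eq]
    apply adj_mkV
    left
    rw [det_vec]
    rw [mul_inv_cancel₀ ha]
    ring
  have adj2 : (Platonic p).Adj (X ν) (Y ν) := by
    apply adj_mkV
    left
    rw [det_vec]
    field_simp
    ring
  have adj3 : (Platonic p).Adj (Y ν) (⟦xw⟧ : PlatonicVertex p) := by
    rw [hw_eq]
    apply adj_mkV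
    right
    rw [det_vec]
    rw [inv_mul_cancel₀ hb]
    ring
  -- assemble the walk in the induced graph
  let G' := SimpleGraph.induce {v : PlatonicVertex p | v ∉ S} (Platonic p)
  have r1 : G'.Reachable ⟨⟦xu⟧, hlineS _ hu⟩ ⟨X ν, hXν⟩ := SimpleGraph.Adj.reachable adj1
  have r2 : G'.Reachable ⟨X ν, hXν⟩ ⟨Y ν, hYν⟩ := SimpleGraph.Adj.reachable adj2
  have r3 : G'.Reachable ⟨Y ν, hYν⟩ ⟨⟦xw⟧, hlineS _ hw⟩ := SimpleGraph.Adj.reachable adj3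
  exact (r1.trans r2).trans r3

lemma reach_anchor (hp : p.Prime) (S : Finset (PlatonicVertex p)) (c : Option (ZMod p))
    (hlineS : ∀ v : PlatonicVertex p, lineV hp v = c → v ∉ S)
    (v : PlatonicVertex p) (hv : v ∉ S) :
    ∃ u, ∃ hu : lineV hp u = c,
      (SimpleGraph.induce {v : PlatonicVertex p | v ∉ S} (Platonic p)).Reachable
        ⟨v, hv⟩ ⟨u, hlineS u hu⟩ := by
  by_cases h : lineV hp v = c
  · exact ⟨v, h, SimpleGraph.Reachable.refl _⟩
  · obtain ⟨w, hw, hadj⟩ := neighbor_on_line hp c v h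
    exact ⟨w, hw, SimpleGraph.Adj.reachable hadj⟩

end PlatonicAux

/-- The Platonic graph `Π_p` is `p`-vertex-connected for an odd prime `p`:
removing fewer than `p` vertices leaves a (nonempty) connected induced subgraph. -/
theorem platonic_vertex_connectivity (p : ℕ) (hp : p.Prime) (hodd : Odd p)
    (S : Finset (PlatonicVertex p)) (hS : S.card < p) :
    (SimpleGraph.induce {v : PlatonicVertex p | v ∉ S} (Platonic p)).Connected := by
  haveI : Fact p.Prime := ⟨hp⟩
  haveI : NeZero p := ⟨hp.ne_zero⟩
  classical
  obtain ⟨c, hc⟩ : ∃ c : Option (ZMod p), c ∉ S.image (PlatonicAux.lineV hp) := by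
    by_contra h
    push_neg at h
    have h1 : (Finset.univ : Finset (Option (ZMod p))) ⊆ S.image (PlatonicAux.lineV hp) :=
      fun c _ => h c
    have h2 := Finset.card_le_card h1
    rw [Finset.card_univ, Fintype.card_option, ZMod.card] at h2
    have h3 := Finset.card_image_le (s := S) (f := PlatonicAux.lineV hp)
    omega
  have hlineS : ∀ v, PlatonicAux.lineV hp v = c → v ∉ S := fun v hv hvS =>
    hc (Finset.mem_image.mpr ⟨v, hvS, hv⟩)
  rw [SimpleGraph.connected_iff]
  constructor
  · rintro ⟨v, hv⟩ ⟨w, hw⟩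
    obtain ⟨v', hv', hrv⟩ := PlatonicAux.reach_anchor hp S c hlineS v hv
    obtain ⟨w', hw', hrw⟩ := PlatonicAux.reach_anchor hp S c hlineS w hw
    exact (hrv.trans (PlatonicAux.line_reach hp hodd S hS c hlineS hv' hw')).trans hrw.symm
  · exact ⟨⟨_, hlineS _ (PlatonicAux.line0_gen hp c)⟩⟩
end

section
/- Let p be an odd prime. Then the modified Platonic graph Π_p' is (p−1)-vertex-connected: for every set S of vertices of Π_p' with |S| < p−1, the induced subgraph of Π_p' on the complement of S is connected (and nonempty). Since Π_p' is (p−1)-regular, p−1 is the maximal possible vertex connectivity. -/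
section Aux
variable (p : ℕ) [Fact p.Prime]

lemma aux_gcd {a b : ZMod p} (hb : b ≠ 0) :
    Nat.gcd (Nat.gcd a.val b.val) p = 1 := by
  have hp : p.Prime := Fact.out
  have hnd : ¬ p ∣ Nat.gcd a.val b.val := by
    intro hdvd
    have h2 : p ∣ b.val := hdvd.trans (Nat.gcd_dvd_right _ _)
    have h3 : b.val = 0 := Nat.eq_zero_of_dvd_of_lt h2 (ZMod.val_lt b)
    exact hb ((ZMod.val_eq_zero b).mp h3)
  exact Nat.coprime_comm.mp (hp.coprime_iff_not_dvd.mpr hnd)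

def vtx (a b : ZMod p) : PlatonicVertex p :=
  if h : b = 0 then ⟦⟨(0, 1), aux_gcd p one_ne_zero⟩⟧
  else ⟦⟨(a, b), aux_gcd p h⟩⟧

lemma vtx_def {a b : ZMod p} (hb : b ≠ 0) :
    vtx p a b = ⟦⟨(a, b), aux_gcd p hb⟩⟧ := dif_neg hb

lemma vtx_eq_iff {a b c d : ZMod p} (hb : b ≠ 0) (hd : d ≠ 0) :
    vtx p a b = vtx p c d ↔ (c = a ∧ d = b) ∨ (c = -a ∧ d = -b) := by
  rw [vtx_def p hb, vtx_def p hd, Quotient.eq]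
  show (((c, d) : ZMod p × ZMod p) = (a, b) ∨ ((c, d) : ZMod p × ZMod p) = -(a, b)) ↔ _
  simp [Prod.ext_iff]

lemma secondNZ_vtx' {a b : ZMod p} (hb : b ≠ 0) :
    ∀ x : PlatonicPair p, ⟦x⟧ = vtx p a b → x.val.2 ≠ 0 := by
  intro x hx
  rw [vtx_def p hb, Quotient.eq] at hx
  rcases hx with h | h
  · have h2 : x.val.2 = b := by rw [← h]
    rw [h2]; exact hb
  · have h2 : x.val.2 = -b := by
      have := congrArg Prod.snd h
      simp at this
      simpa using (congrArg Neg.neg this).symm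
    rw [h2]; simpa using hb
lemma secondNZ_vtxP {a b : ZMod p} (hb : b ≠ 0) :
    ∀ x : PlatonicPair p, ⟦x⟧ = vtx p a b → x.val.2 ≠ 0 :=
  secondNZ_vtx' p hb

lemma adj_vtx {a b c d : ZMod p} (hb : b ≠ 0) (hd : d ≠ 0)
    (hdet : a * d - b * c = 1 ∨ a * d - b * c = -1) :
    (Platonic p).Adj (vtx p a b) (vtx p c d) := by
  have hne : vtx p a b ≠ vtx p c d := by
    intro he
    have h0 : a * d - b * c = 0 := by
      rcases (vtx_eq_iff p hb hd).mp he with ⟨h1, h2⟩ | ⟨h1, h2⟩ <;> subst h1 <;> subst h2 <;> ring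
    rcases hdet with h | h <;> rw [h0] at h
    · exact one_ne_zero h.symm
    · exact (neg_ne_zero.mpr one_ne_zero) h.symm
  exact ⟨hne, ⟨(a,b), aux_gcd p hb⟩, ⟨(c,d), aux_gcd p hd⟩,
    (vtx_def p hb).symm, (vtx_def p hd).symm, hdet⟩

def slopeP : PlatonicVertex p → ZMod p :=
  Quotient.lift (fun x : PlatonicPair p => x.val.1 * x.val.2⁻¹) (by
    rintro x y (h | h) <;> show x.val.1 * x.val.2⁻¹ = y.val.1 * y.val.2⁻¹ <;> rw [h]
    show x.val.1 * x.val.2⁻¹ = (-x.val).1 * (-x.val).2⁻¹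
    simp [inv_neg])

lemma slopeP_vtx {a b : ZMod p} (hb : b ≠ 0) : slopeP p (vtx p a b) = a * b⁻¹ := by
  rw [vtx_def p hb]; rfl

def psi (z : ZMod p) : ZMod p := if z.val % 2 = 1 then z + 1 else z - 1

lemma psi_sub (z : ZMod p) : psi p z - z = 1 ∨ psi p z - z = -1 := by
  unfold psi; split
  · left; ring
  · right; ring

lemma psi_spec (hodd : p % 2 = 1) {z : ZMod p} (hz : z ≠ 0) :
    psi p z ≠ 0 ∧ psi p (psi p z) = z := by
  have hplt : 1 < p := (Fact.out : p.Prime).one_lt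
  have hn0 : z.val ≠ 0 := fun h => hz ((ZMod.val_eq_zero z).mp h)
  have hnlt : z.val < p := ZMod.val_lt z
  have hzc : ((z.val : ℕ) : ZMod p) = z := ZMod.natCast_zmod_val z
  by_cases hpar : z.val % 2 = 1
  · have hlt : z.val + 1 < p := by omega
    have hval : (z + 1).val = z.val + 1 := by
      conv_lhs => rw [← hzc]
      rw [show ((z.val : ℕ) : ZMod p) + 1 = ((z.val + 1 : ℕ) : ZMod p) by push_cast; ring]
      exact ZMod.val_cast_of_lt hlt
    have hpsi : psi p z = z + 1 := by simp only [psi, if_pos hpar]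
    have h1 : psi p z ≠ 0 := by
      rw [hpsi]; intro h
      rw [h, ZMod.val_zero] at hval; omega
    refine ⟨h1, ?_⟩
    have hnpar : ¬ ((z+1).val % 2 = 1) := by omega
    rw [hpsi]
    have h3 : psi p (z+1) = z + 1 - 1 := by simp only [psi, if_neg hnpar]
    rw [h3]; ring
  · have h2 : 2 ≤ z.val := by omega
    have hc : ((z.val - 1 : ℕ) : ZMod p) = z - 1 := by
      rw [Nat.cast_sub (by omega : 1 ≤ z.val), hzc]; norm_num
    have hval : (z - 1).val = z.val - 1 := by
      rw [← hc, ZMod.val_cast_of_lt (by omega)]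
    have hpsi : psi p z = z - 1 := by simp only [psi, if_neg hpar]
    have h1 : psi p z ≠ 0 := by
      rw [hpsi]; intro h
      rw [h, ZMod.val_zero] at hval; omega
    refine ⟨h1, ?_⟩
    have hppar : (z-1).val % 2 = 1 := by omega
    rw [hpsi]
    have h3 : psi p (z-1) = z - 1 + 1 := by simp only [psi, if_pos hppar]
    rw [h3]; ring

def wv (A c t μ : ZMod p) : PlatonicVertex p :=
  vtx p ((A - (t*c)⁻¹) * ((t*c)⁻¹ * μ)⁻¹) (((t*c)⁻¹ * μ)⁻¹)

lemma wv_k_ne {c t μ : ZMod p} (hc : c ≠ 0) (ht : t ≠ 0) (hμ : μ ≠ 0) :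
    ((t*c)⁻¹ * μ)⁻¹ ≠ 0 :=
  inv_ne_zero (mul_ne_zero (inv_ne_zero (mul_ne_zero ht hc)) hμ)

lemma wv_k_eq {c t μ : ZMod p} : ((t*c)⁻¹ * μ)⁻¹ = t * c * μ⁻¹ := by
  rw [mul_inv, inv_inv]

lemma wv_inj {A c t₁ t₂ μ₁ μ₂ : ZMod p} (hc : c ≠ 0) (ht₁ : t₁ ≠ 0) (ht₂ : t₂ ≠ 0)
    (hμ₁ : μ₁ ≠ 0) (hμ₂ : μ₂ ≠ 0) (h : wv p A c t₁ μ₁ = wv p A c t₂ μ₂) :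
    t₁ = t₂ ∧ (μ₂ = μ₁ ∨ μ₂ = -μ₁) := by
  have hk₁ := wv_k_ne p hc ht₁ hμ₁
  have hk₁' : t₁ * c * μ₁⁻¹ ≠ 0 := by rw [← wv_k_eq]; exact hk₁
  have hk₂ := wv_k_ne p hc ht₂ hμ₂
  rw [wv, wv, vtx_eq_iff p hk₁ hk₂] at h
  simp only [wv_k_eq] at h
  rcases h with ⟨h1, h2⟩ | ⟨h1, h2⟩
  · rw [h2] at h1
    have hxx : A - (t₂*c)⁻¹ = A - (t₁*c)⁻¹ := mul_right_cancel₀ hk₁' h1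
    have hx : (t₂*c)⁻¹ = (t₁*c)⁻¹ := sub_right_injective hxx
    have ht : t₁ = t₂ := (mul_right_cancel₀ hc (inv_injective hx)).symm
    subst ht
    refine ⟨rfl, Or.inl ?_⟩
    exact inv_injective (mul_left_cancel₀ (mul_ne_zero ht₁ hc) h2)
  · rw [h2, mul_neg] at h1
    have h1' := neg_injective h1
    have hxx : A - (t₂*c)⁻¹ = A - (t₁*c)⁻¹ := mul_right_cancel₀ hk₁' h1'
    have hx : (t₂*c)⁻¹ = (t₁*c)⁻¹ := sub_right_injective hxx
    have ht : t₁ = t₂ := (mul_right_cancel₀ hc (inv_injective hx)).symm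
    subst ht
    refine ⟨rfl, Or.inr ?_⟩
    rw [← mul_neg] at h2
    have h3 : μ₂⁻¹ = -μ₁⁻¹ := mul_left_cancel₀ (mul_ne_zero ht₁ hc) h2
    rw [← inv_neg] at h3
    exact inv_injective h3

lemma adj_fib_wv {A c t m : ZMod p} (hc : c ≠ 0) (ht : t ≠ 0) (hm : m ≠ 0) :
    (Platonic p).Adj (vtx p (A*m) m) (wv p A c t m) := by
  have hx : (t*c)⁻¹ ≠ 0 := inv_ne_zero (mul_ne_zero ht hc)
  unfold wv
  apply adj_vtx p hm (wv_k_ne p hc ht hm)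
  left
  have h1 : A*m*((t*c)⁻¹*m)⁻¹ - m*((A - (t*c)⁻¹) * ((t*c)⁻¹*m)⁻¹)
      = ((t*c)⁻¹*m) * ((t*c)⁻¹*m)⁻¹ := by ring
  rw [h1, mul_inv_cancel₀ (mul_ne_zero hx hm)]

lemma adj_wv_fib {A c t m' : ZMod p} (hc : c ≠ 0) (ht : t ≠ 0) (hm' : m' ≠ 0) :
    (Platonic p).Adj (wv p A c t m') (vtx p (A*m') m') := by
  have hx : (t*c)⁻¹ ≠ 0 := inv_ne_zero (mul_ne_zero ht hc)
  unfold wv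
  apply adj_vtx p (wv_k_ne p hc ht hm') hm'
  right
  have h1 : (A - (t*c)⁻¹) * ((t*c)⁻¹*m')⁻¹ * m' - ((t*c)⁻¹*m')⁻¹ * (A*m')
      = -(((t*c)⁻¹*m') * ((t*c)⁻¹*m')⁻¹) := by ring
  rw [h1, mul_inv_cancel₀ (mul_ne_zero hx hm')]

lemma adj_wv_wv {A m m' t s : ZMod p} (hm : m ≠ 0) (hm' : m' ≠ 0) (ht : t ≠ 0) (hs : s ≠ 0)
    (hsub : t - s = 1 ∨ t - s = -1) :
    (Platonic p).Adj (wv p A (m*m') t m) (wv p A (m*m') s m') := by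
  have hc : m*m' ≠ 0 := mul_ne_zero hm hm'
  unfold wv
  apply adj_vtx p (wv_k_ne p hc ht hm) (wv_k_ne p hc hs hm')
  have hdet : (A - (t*(m*m'))⁻¹) * ((t*(m*m'))⁻¹*m)⁻¹ * ((s*(m*m'))⁻¹*m')⁻¹
      - ((t*(m*m'))⁻¹*m)⁻¹ * ((A - (s*(m*m'))⁻¹) * ((s*(m*m'))⁻¹*m')⁻¹) = t - s := by
    simp only [wv_k_eq]
    field_simp
    ring
  rw [hdet]
  exact hsub

end Aux


/-- The modified Platonic graph `Π_p'` is `(p-1)`-vertex-connected for an odd prime `p`: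
removing fewer than `p-1` vertices leaves a (nonempty) connected induced subgraph. -/
theorem modPlatonic_vertex_connectivity (p : ℕ) (hp : p.Prime) (hodd : Odd p)
    (S : Finset {v : PlatonicVertex p | secondNZ p v}) (hS : S.card < p - 1) :
    (SimpleGraph.induce {v : {v : PlatonicVertex p | secondNZ p v} | v ∉ S}
      (ModPlatonic p)).Connected := by
  classical
  haveI : Fact p.Prime := ⟨hp⟩
  have hodd' : p % 2 = 1 := Nat.odd_iff.mp hodd
  have hp2 : 2 ≤ p := hp.two_le
  -- find a fiber (slope) A avoided by S
  obtain ⟨A, hA⟩ : ∃ A : ZMod p, ∀ v ∈ S, slopeP p (v : PlatonicVertex p) ≠ A := by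
    by_contra hcon
    push_neg at hcon
    have hsub : (Finset.univ : Finset (ZMod p)) ⊆
        S.image (fun v : {v : PlatonicVertex p | secondNZ p v} => slopeP p v.1) := by
      intro a _
      obtain ⟨v, hv, he⟩ := hcon a
      exact Finset.mem_image.mpr ⟨v, hv, he⟩
    have h1 := Finset.card_le_card hsub
    rw [Finset.card_univ, ZMod.card] at h1
    have h2 := Finset.card_image_le (s := S)
      (f := fun v : {v : PlatonicVertex p | secondNZ p v} => slopeP p v.1)
    omega
  have fibNotS : ∀ (m : ZMod p) (hm : m ≠ 0),
      (⟨vtx p (A * m) m, secondNZ_vtxP p hm⟩ : {v : PlatonicVertex p | secondNZ p v}) ∉ S := by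
    intro m hm hmem
    apply hA _ hmem
    show slopeP p (vtx p (A*m) m) = A
    rw [slopeP_vtx p hm, mul_assoc, mul_inv_cancel₀ hm, mul_one]
  rw [SimpleGraph.connected_iff]
  constructor
  · -- preconnected
    intro V₁ V₂
    -- Step 1: every vertex reaches a fiber-A vertex
    have step : ∀ V : {v : {v : PlatonicVertex p | secondNZ p v} | v ∉ S},
        ∃ (m : ZMod p) (hm : m ≠ 0),
          (SimpleGraph.induce {v : {v : PlatonicVertex p | secondNZ p v} | v ∉ S}
            (ModPlatonic p)).Reachable V
            ⟨⟨vtx p (A*m) m, secondNZ_vtxP p hm⟩, fibNotS m hm⟩ := by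
      rintro ⟨⟨v, hvP⟩, hvS⟩
      obtain ⟨x, hx⟩ := Quotient.exists_rep v
      have hb : x.val.2 ≠ 0 := hvP x hx
      have hv : v = vtx p x.val.1 x.val.2 := by
        rw [vtx_def p hb, ← hx]
      by_cases hca : x.val.1 - A * x.val.2 = 0
      · refine ⟨x.val.2, hb, ?_⟩
        have hv2 : v = vtx p (A * x.val.2) x.val.2 := by
          rw [hv]
          congr 1
          linear_combination hca
        have he : (⟨⟨v, hvP⟩, hvS⟩ :
            {v : {v : PlatonicVertex p | secondNZ p v} | v ∉ S}) =
            ⟨⟨vtx p (A*x.val.2) x.val.2, secondNZ_vtxP p hb⟩, fibNotS _ hb⟩ :=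
          Subtype.ext (Subtype.ext hv2)
        rw [he]
      · refine ⟨(x.val.1 - A*x.val.2)⁻¹, inv_ne_zero hca, ?_⟩
        apply SimpleGraph.Adj.reachable
        show (Platonic p).Adj v (vtx p (A*(x.val.1 - A*x.val.2)⁻¹) (x.val.1 - A*x.val.2)⁻¹)
        rw [hv]
        apply adj_vtx p hb (inv_ne_zero hca)
        left
        have h1 : x.val.1 * (x.val.1 - A*x.val.2)⁻¹
            - x.val.2 * (A*(x.val.1 - A*x.val.2)⁻¹)
            = (x.val.1 - A*x.val.2) * (x.val.1 - A*x.val.2)⁻¹ := by ring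
        rw [h1, mul_inv_cancel₀ hca]
    -- Step 2: two fiber-A vertices are connected
    have reachFib : ∀ (m m' : ZMod p) (hm : m ≠ 0) (hm' : m' ≠ 0),
        (SimpleGraph.induce {v : {v : PlatonicVertex p | secondNZ p v} | v ∉ S}
          (ModPlatonic p)).Reachable
          ⟨⟨vtx p (A*m) m, secondNZ_vtxP p hm⟩, fibNotS m hm⟩
          ⟨⟨vtx p (A*m') m', secondNZ_vtxP p hm'⟩, fibNotS m' hm'⟩ := by
      intro m m' hm hm'
      by_cases heq : vtx p (A*m) m = vtx p (A*m') m'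
      · have he : (⟨⟨vtx p (A*m) m, secondNZ_vtxP p hm⟩, fibNotS m hm⟩ :
            {v : {v : PlatonicVertex p | secondNZ p v} | v ∉ S}) =
            ⟨⟨vtx p (A*m') m', secondNZ_vtxP p hm'⟩, fibNotS m' hm'⟩ :=
          Subtype.ext (Subtype.ext heq)
        rw [he]
      · have hmm1 : m' ≠ m := by
          intro h; subst h; exact heq rfl
        have hmm2 : m' ≠ -m := by
          intro h
          apply heq
          rw [h]
          exact (vtx_eq_iff p hm (neg_ne_zero.mpr hm)).mpr (Or.inr ⟨by ring, rfl⟩)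
        have hc : m * m' ≠ 0 := mul_ne_zero hm hm'
        -- find a good index z
        obtain ⟨z, hz, hz1, hz2⟩ : ∃ z : ZMod p, z ≠ 0 ∧
            (∀ u ∈ S, (u : PlatonicVertex p) ≠ wv p A (m*m') z m) ∧
            (∀ u ∈ S, (u : PlatonicVertex p) ≠ wv p A (m*m') (psi p z) m') := by
          by_contra hcon
          push_neg at hcon
          set f : ZMod p → {v : PlatonicVertex p | secondNZ p v} := fun z =>
            if h1 : ∃ u ∈ S, (u : PlatonicVertex p) = wv p A (m*m') z m then h1.choose
            else if h2 : ∃ u ∈ S, (u : PlatonicVertex p) = wv p A (m*m') (psi p z) m' then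
              h2.choose
            else ⟨vtx p 0 1, secondNZ_vtxP p one_ne_zero⟩ with hf
          have hmaps : ∀ z ∈ Finset.univ.erase (0 : ZMod p), f z ∈ S := by
            intro z hzmem
            have hz0 : z ≠ 0 := Finset.ne_of_mem_erase hzmem
            by_cases h1 : ∃ u ∈ S, (u : PlatonicVertex p) = wv p A (m*m') z m
            · rw [hf]; simp only [dif_pos h1]; exact h1.choose_spec.1
            · have hforall : ∀ u ∈ S, (u : PlatonicVertex p) ≠ wv p A (m*m') z m := by
                intro u hu he
                exact h1 ⟨u, hu, he⟩
              obtain ⟨u, hu, he⟩ := hcon z hz0 hforall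
              have h2 : ∃ u ∈ S, (u : PlatonicVertex p) = wv p A (m*m') (psi p z) m' :=
                ⟨u, hu, he⟩
              rw [hf]; simp only [dif_neg h1, dif_pos h2]; exact h2.choose_spec.1
          have hinj : Set.InjOn f (Finset.univ.erase (0 : ZMod p)) := by
            intro z₁ hz₁ z₂ hz₂ hfe
            have hz₁0 : z₁ ≠ 0 := by
              have := hz₁
              simp only [Finset.coe_erase, Set.mem_diff, Finset.coe_univ, Set.mem_univ,
                true_and, Set.mem_singleton_iff] at this
              exact this
            have hz₂0 : z₂ ≠ 0 := by
              have := hz₂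
              simp only [Finset.coe_erase, Set.mem_diff, Finset.coe_univ, Set.mem_univ,
                true_and, Set.mem_singleton_iff] at this
              exact this
            have hp₁ := psi_spec p hodd' hz₁0
            have hp₂ := psi_spec p hodd' hz₂0
            have key : ∀ z, z ≠ 0 → ((f z : PlatonicVertex p) = wv p A (m*m') z m ∨
                (f z : PlatonicVertex p) = wv p A (m*m') (psi p z) m') := by
              intro z hz0
              by_cases h1 : ∃ u ∈ S, (u : PlatonicVertex p) = wv p A (m*m') z m
              · left; rw [hf]; simp only [dif_pos h1]; exact h1.choose_spec.2
              · have hforall : ∀ u ∈ S, (u : PlatonicVertex p) ≠ wv p A (m*m') z m := by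
                  intro u hu he
                  exact h1 ⟨u, hu, he⟩
                obtain ⟨u, hu, he⟩ := hcon z hz0 hforall
                have h2 : ∃ u ∈ S, (u : PlatonicVertex p) = wv p A (m*m') (psi p z) m' :=
                  ⟨u, hu, he⟩
                right; rw [hf]; simp only [dif_neg h1, dif_pos h2]; exact h2.choose_spec.2
            have hv12 : (f z₁ : PlatonicVertex p) = (f z₂ : PlatonicVertex p) := by rw [hfe]
            rcases key z₁ hz₁0 with k1 | k1 <;> rcases key z₂ hz₂0 with k2 | k2
            · have := wv_inj p hc hz₁0 hz₂0 hm hm (k1.symm.trans (hv12.trans k2))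
              exact this.1
            · have := wv_inj p hc hz₁0 hp₂.1 hm hm' (k1.symm.trans (hv12.trans k2))
              rcases this.2 with h | h
              · exact absurd h hmm1
              · exact absurd h hmm2
            · have := wv_inj p hc hp₁.1 hz₂0 hm' hm (k1.symm.trans (hv12.trans k2))
              rcases this.2 with h | h
              · exact absurd h.symm hmm1
              · exact absurd (by rw [h, neg_neg]) hmm2
            · have := wv_inj p hc hp₁.1 hp₂.1 hm' hm' (k1.symm.trans (hv12.trans k2))
              have hpe : psi p z₁ = psi p z₂ := this.1
              rw [← hp₂.2, ← hpe, hp₁.2]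
          have hcard := Finset.card_le_card_of_injOn f hmaps hinj
          rw [Finset.card_erase_of_mem (Finset.mem_univ _), Finset.card_univ, ZMod.card] at hcard
          omega
        have hpz := psi_spec p hodd' hz
        have hnot1 : (⟨wv p A (m*m') z m, secondNZ_vtxP p (wv_k_ne p hc hz hm)⟩ :
            {v : PlatonicVertex p | secondNZ p v}) ∉ S := fun hmem => hz1 _ hmem rfl
        have hnot2 : (⟨wv p A (m*m') (psi p z) m', secondNZ_vtxP p (wv_k_ne p hc hpz.1 hm')⟩ :
            {v : PlatonicVertex p | secondNZ p v}) ∉ S := fun hmem => hz2 _ hmem rfl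
        have a1 : (SimpleGraph.induce {v : {v : PlatonicVertex p | secondNZ p v} | v ∉ S}
            (ModPlatonic p)).Adj
            ⟨⟨vtx p (A*m) m, secondNZ_vtxP p hm⟩, fibNotS m hm⟩
            ⟨⟨wv p A (m*m') z m, secondNZ_vtxP p (wv_k_ne p hc hz hm)⟩, hnot1⟩ :=
          adj_fib_wv p hc hz hm
        have a2 : (SimpleGraph.induce {v : {v : PlatonicVertex p | secondNZ p v} | v ∉ S}
            (ModPlatonic p)).Adj
            ⟨⟨wv p A (m*m') z m, secondNZ_vtxP p (wv_k_ne p hc hz hm)⟩, hnot1⟩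
            ⟨⟨wv p A (m*m') (psi p z) m', secondNZ_vtxP p (wv_k_ne p hc hpz.1 hm')⟩, hnot2⟩ := by
          apply adj_wv_wv p hm hm' hz hpz.1
          rcases psi_sub p z with h | h
          · right; linear_combination -h
          · left; linear_combination -h
        have a3 : (SimpleGraph.induce {v : {v : PlatonicVertex p | secondNZ p v} | v ∉ S}
            (ModPlatonic p)).Adj
            ⟨⟨wv p A (m*m') (psi p z) m', secondNZ_vtxP p (wv_k_ne p hc hpz.1 hm')⟩, hnot2⟩
            ⟨⟨vtx p (A*m') m', secondNZ_vtxP p hm'⟩, fibNotS m' hm'⟩ :=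
          adj_wv_fib p hc hpz.1 hm'
        exact a1.reachable.trans (a2.reachable.trans a3.reachable)
    obtain ⟨m₁, hm₁, r₁⟩ := step V₁
    obtain ⟨m₂, hm₂, r₂⟩ := step V₂
    exact r₁.trans ((reachFib m₁ m₂ hm₁ hm₂).trans r₂.symm)
  · -- nonempty
    exact ⟨⟨⟨vtx p (A*1) 1, secondNZ_vtxP p one_ne_zero⟩, fibNotS 1 one_ne_zero⟩⟩
end

section
/- Let p be an odd prime. For every vertex v = [λ,μ] of Π_p with μ ≠ 0 and every i with 1 ≤ i ≤ (p−1)/2, the number of vertices w of Π_p that are adjacent both to v and to the principal-axis vertex [i,0] is exactly 2. In other words, every vertex not on the principal axis has exactly two neighbours on the boundary of each wheel. -/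
lemma pairGcd {p : ℕ} (hp : p.Prime) [NeZero p] (α β : ZMod p) (hβ : β ≠ 0) :
    Nat.gcd (Nat.gcd α.val β.val) p = 1 := by
  rw [Nat.gcd_comm]
  refine (Nat.Prime.coprime_iff_not_dvd hp).2 ?_
  intro h
  have hb : p ∣ β.val := h.trans (Nat.gcd_dvd_right _ _)
  have hb0 : β.val ≠ 0 := by simpa [ZMod.val_eq_zero] using hβ
  exact absurd (Nat.le_of_dvd (Nat.pos_of_ne_zero hb0) hb) (not_le.mpr (ZMod.val_lt β))

lemma platonic_adj_iff {N : ℕ} [NeZero N] (hN : (1 : ZMod N) ≠ 0)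
    (x y : PlatonicPair N) :
    (Platonic N).Adj ⟦x⟧ ⟦y⟧ ↔
      (x.val.1 * y.val.2 - x.val.2 * y.val.1 = 1 ∨
       x.val.1 * y.val.2 - x.val.2 * y.val.1 = -1) := by
  constructor
  · rintro ⟨-, x', y', hx', hy', hdet⟩
    have hx := Quotient.exact hx'
    have hy := Quotient.exact hy'
    obtain hx | hx := hx <;> obtain hy | hy := hy <;>
      obtain h | h := hdet <;>
      simp only [hx, hy, Prod.fst_neg, Prod.snd_neg] <;>
      first
        | (left; linear_combination h)
        | (right; linear_combination h)
        | (left; linear_combination -h)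
        | (right; linear_combination -h)
  · intro hdet
    refine ⟨?_, x, y, rfl, rfl, hdet⟩
    intro hEq
    obtain h | h := Quotient.exact hEq <;>
      simp only [h, Prod.fst_neg, Prod.snd_neg] at hdet <;>
      apply hN <;>
      obtain hd | hd := hdet <;>
      first
        | linear_combination hd
        | linear_combination -hd

/-- Every vertex `v = [λ,μ]` of `Π_p` with `μ ≠ 0` has exactly two common neighbours
with each principal-axis vertex `[i,0]` (`1 ≤ i ≤ (p-1)/2`): every vertex not on the
principal axis has exactly two neighbours on the boundary of each wheel. -/
theorem platonic_two_neighbours_per_wheel (p : ℕ) (hp : p.Prime) (hodd : Odd p)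
    [NeZero p] (v a : PlatonicVertex p) (hv : secondNZ p v)
    (i : ℕ) (hi1 : 1 ≤ i) (hi2 : i ≤ (p - 1) / 2)
    (ha : ∃ x : PlatonicPair p, ⟦x⟧ = a ∧ x.val = ((i : ZMod p), 0)) :
    (Finset.univ.filter
      (fun w : PlatonicVertex p =>
        (Platonic p).Adj w v ∧ (Platonic p).Adj w a)).card = 2 := by
  haveI := Fact.mk hp
  classical
  have h1 : (1 : ZMod p) ≠ 0 := one_ne_zero
  have h2 : (2 : ZMod p) ≠ 0 := by
    intro h
    have hdvd : p ∣ 2 := by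
      have := (CharP.cast_eq_zero_iff (ZMod p) p 2).1 (by exact_mod_cast h)
      exact this
    have hpe := (Nat.prime_dvd_prime_iff_eq hp Nat.prime_two).1 hdvd
    rw [hpe] at hodd
    exact (by decide : ¬ Odd 2) hodd
  obtain ⟨xv, hxv⟩ := Quotient.exists_rep v
  obtain ⟨xa, hxa, hxaval⟩ := ha
  have hM : xv.val.2 ≠ 0 := hv xv hxv
  have ha1 : xa.val.1 = (i : ZMod p) := by rw [hxaval]
  have ha2 : xa.val.2 = 0 := by rw [hxaval]
  have hI : (i : ZMod p) ≠ 0 := by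
    intro h
    have hgcd := xa.property
    rw [hxaval, h] at hgcd
    simp [ZMod.val_zero] at hgcd
    exact hp.one_lt.ne' hgcd
  set L := xv.val.1 with hLdef
  set M := xv.val.2 with hMdef
  set I := (i : ZMod p) with hIdef
  set u := I⁻¹ with hudef
  have hIu : I * u = 1 := mul_inv_cancel₀ hI
  have hu0 : u ≠ 0 := inv_ne_zero hI
  let x1 : PlatonicPair p := ⟨(M⁻¹ * (u * L + 1), u), pairGcd hp _ _ hu0⟩
  let x2 : PlatonicPair p := ⟨(M⁻¹ * (u * L + (-1)), u), pairGcd hp _ _ hu0⟩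
  have hx1v1 : x1.val.1 = M⁻¹ * (u * L + 1) := rfl
  have hx1v2 : x1.val.2 = u := rfl
  have hx2v1 : x2.val.1 = M⁻¹ * (u * L + (-1)) := rfl
  have hx2v2 : x2.val.2 = u := rfl
  have hne : (⟦x1⟧ : PlatonicVertex p) ≠ ⟦x2⟧ := by
    intro hEq
    obtain h | h := Quotient.exact hEq
    · have h' : M⁻¹ * (u * L + (-1)) = M⁻¹ * (u * L + 1) := congrArg Prod.fst h
      have h'' := mul_left_cancel₀ (inv_ne_zero hM) h'
      exact h2 (by linear_combination -h'')
    · have h' : (u : ZMod p) = -u := by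
        have := congrArg Prod.snd h
        simpa [hx2v2, Prod.snd_neg, hx1v2] using this
      have h2u : (2 : ZMod p) * u = 0 := by linear_combination h'
      exact hu0 ((mul_eq_zero.mp h2u).resolve_left h2)
  -- the two candidates are common neighbours
  have hmem : ∀ x : PlatonicPair p, x.val.2 = u →
      (∀ s : ZMod p, (s = 1 ∨ s = -1) → x.val.1 * M - x.val.2 * L = s →
        (Platonic p).Adj ⟦x⟧ v ∧ (Platonic p).Adj ⟦x⟧ a) := by
    intro x hxu s hs hdet
    constructor
    · rw [← hxv, platonic_adj_iff h1]
      rcases hs with rfl | rfl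
      · exact Or.inl hdet
      · exact Or.inr hdet
    · rw [← hxa, platonic_adj_iff h1]
      right
      rw [ha1, ha2, hxu]
      linear_combination -u * hIu + u * hIu - (by rw [mul_comm] : u * I = I * u).trans hIu
  have hdet1 : x1.val.1 * M - x1.val.2 * L = 1 := by
    rw [hx1v1, hx1v2]; field_simp; ring
  have hdet2 : x2.val.1 * M - x2.val.2 * L = -1 := by
    rw [hx2v1, hx2v2]; field_simp; ring
  -- key characterization
  have key : ∀ w : PlatonicVertex p,
      ((Platonic p).Adj w v ∧ (Platonic p).Adj w a) ↔ (w = ⟦x1⟧ ∨ w = ⟦x2⟧) := by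
    intro w
    constructor
    · rintro ⟨hwv, hwa⟩
      obtain ⟨xw, rfl⟩ := Quotient.exists_rep w
      rw [← hxv, platonic_adj_iff h1] at hwv
      rw [← hxa, platonic_adj_iff h1] at hwa
      rw [ha1, ha2] at hwa
      set A := xw.val.1 with hAdef
      set B := xw.val.2 with hBdef
      have hBI : B * I = 1 ∨ B * I = -1 := by
        rcases hwa with h | h
        · right; linear_combination -h
        · left; linear_combination -h
      have hB : B = u ∨ B = -u := by
        rcases hBI with h | h
        · left; linear_combination u * h - B * hIu
        · right; linear_combination u * h - B * hIu
      rcases hB with hB | hB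
      · -- B = u : w is x1 or x2 directly
        rcases hwv with h | h
        · left
          apply Quotient.sound
          left
          refine Prod.ext ?_ ?_
          · show M⁻¹ * (u * L + 1) = A
            rw [hB] at h
            field_simp
            first | linear_combination h | linear_combination -h
          · exact hx1v2.trans hB.symm
        · right
          apply Quotient.sound
          left
          refine Prod.ext ?_ ?_
          · show M⁻¹ * (u * L + (-1)) = A
            rw [hB] at h
            field_simp
            first | linear_combination h | linear_combination -h
          · exact hx2v2.trans hB.symm
      · -- B = -u : the negated representative works
        rcases hwv with h | h
        · right
          apply Quotient.sound
          right
          refine Prod.ext ?_ ?_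
          · show M⁻¹ * (u * L + (-1)) = (-xw.val).1
            rw [Prod.fst_neg, hB] at *
            rw [hB] at h
            field_simp
            first | linear_combination h | linear_combination -h
          · show u = (-xw.val).2
            rw [Prod.snd_neg, ← hBdef, hB, neg_neg]
        · left
          apply Quotient.sound
          right
          refine Prod.ext ?_ ?_
          · show M⁻¹ * (u * L + 1) = (-xw.val).1
            rw [Prod.fst_neg, hB] at *
            rw [hB] at h
            field_simp
            first | linear_combination h | linear_combination -h
          · show u = (-xw.val).2
            rw [Prod.snd_neg, ← hBdef, hB, neg_neg]
    · rintro (rfl | rfl)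
      · exact hmem x1 hx1v2 1 (Or.inl rfl) hdet1
      · exact hmem x2 hx2v2 (-1) (Or.inr rfl) hdet2
  have hfilter : (Finset.univ.filter
      (fun w : PlatonicVertex p =>
        (Platonic p).Adj w v ∧ (Platonic p).Adj w a)) = {⟦x1⟧, ⟦x2⟧} := by
    ext w
    simp only [Finset.mem_filter, Finset.mem_univ, true_and, Finset.mem_insert,
      Finset.mem_singleton]
    exact key w
  rw [hfilter, Finset.card_pair hne]
end

section
/- Let p be an odd prime and let i ≠ j with 1 ≤ i, j ≤ (p−1)/2. Then there exists a bijection Φ from the set of neighbours of [i,0] in Π_p to the set of neighbours of [j,0] in Π_p such that v is adjacent to Φ(v) in Π_p for every neighbour v of [i,0]. Explicitly, one may take Φ([μ, i⁻¹]) = [i + i·j⁻¹·μ, j⁻¹]. -/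
lemma pair_gcd (p : ℕ) [NeZero p] (hp : p.Prime) (x y : ZMod p) (h : x ≠ 0 ∨ y ≠ 0) :
    Nat.gcd (Nat.gcd x.val y.val) p = 1 := by
  rw [Nat.gcd_comm]
  refine (Nat.Prime.coprime_iff_not_dvd hp).mpr ?_
  intro hdvd
  rcases h with h | h
  · exact h (by
      rw [← ZMod.val_eq_zero]
      exact Nat.eq_zero_of_dvd_of_lt (hdvd.trans (Nat.gcd_dvd_left _ _)) (ZMod.val_lt x))
  · exact h (by
      rw [← ZMod.val_eq_zero]
      exact Nat.eq_zero_of_dvd_of_lt (hdvd.trans (Nat.gcd_dvd_right _ _)) (ZMod.val_lt y))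

lemma wheel_equiv (p : ℕ) [NeZero p] (hp : p.Prime) (hodd : Odd p)
    (I c : ZMod p) (hI : I ≠ 0) (hc : c ≠ 0) (hIc : I * c = 1)
    (a : PlatonicVertex p)
    (ha : ⟦(⟨(I, 0), pair_gcd p hp I 0 (Or.inl hI)⟩ : PlatonicPair p)⟧ = a) :
    ∃ e : ZMod p ≃ (Platonic p).neighborSet a,
      ∀ μ : ZMod p,
        (e μ).val = ⟦(⟨(μ, c), pair_gcd p hp μ c (Or.inr hc)⟩ : PlatonicPair p)⟧ := by
  haveI : Fact p.Prime := ⟨hp⟩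
  have h2 : (2 : ZMod p) ≠ 0 := by
    intro h
    have hd := (ZMod.natCast_eq_zero_iff 2 p).mp (by exact_mod_cast h)
    have hp2 := (Nat.prime_dvd_prime_iff_eq hp Nat.prime_two).mp hd
    rw [hp2] at hodd
    exact (Nat.not_odd_iff_even.mpr even_two) hodd
  have hcc : c ≠ -c := by
    intro h
    apply hc
    have : (2 : ZMod p) * c = 0 := by linear_combination h
    rcases mul_eq_zero.mp this with h' | h'
    · exact absurd h' h2
    · exact h'
  have adj : ∀ μ : ZMod p,
      (Platonic p).Adj a ⟦(⟨(μ, c), pair_gcd p hp μ c (Or.inr hc)⟩ : PlatonicPair p)⟧ := by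
    intro μ
    show _ ≠ _ ∧ _
    refine ⟨?_, ⟨(I, 0), pair_gcd p hp I 0 (Or.inl hI)⟩,
      ⟨(μ, c), pair_gcd p hp μ c (Or.inr hc)⟩, ha, rfl, Or.inl (by simp [hIc])⟩
    intro h
    rw [← ha] at h
    rcases Quotient.exact h with h' | h'
    · exact hc (congrArg Prod.snd h')
    · exact hc (by simpa using congrArg Prod.snd h')
  set g : ZMod p → (Platonic p).neighborSet a := fun μ =>
    ⟨⟦(⟨(μ, c), pair_gcd p hp μ c (Or.inr hc)⟩ : PlatonicPair p)⟧, adj μ⟩ with hg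
  have hinj : Function.Injective g := by
    intro μ ν h
    have h' := congrArg Subtype.val h
    rcases Quotient.exact h' with h'' | h''
    · exact (congrArg Prod.fst h'').symm
    · exact absurd (by simpa using congrArg Prod.snd h'') hcc
  have hsurj : Function.Surjective g := by
    rintro ⟨v, hv⟩
    change _ ≠ _ ∧ _ at hv
    obtain ⟨hne, x, y, hx, hy, hdet⟩ := hv
    rw [← ha] at hx
    have hxval : x.val = ((I : ZMod p), 0) ∨ x.val = (-I, 0) := by
      rcases Quotient.exact hx with h' | h'
      · exact Or.inl h'.symm
      · right
        have h1 : I = -x.val.1 := congrArg Prod.fst h'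
        have h2 : (0 : ZMod p) = -x.val.2 := congrArg Prod.snd h'
        exact Prod.ext (by linear_combination h1) (by linear_combination h2)
    have hy2 : I * y.val.2 = 1 ∨ I * y.val.2 = -1 := by
      rcases hxval with h' | h' <;>
        [have hx1 : x.val.1 = I := congrArg Prod.fst h';
         have hx1 : x.val.1 = -I := congrArg Prod.fst h'] <;>
      have hx2 : x.val.2 = 0 := congrArg Prod.snd h' <;>
      rcases hdet with hd | hd
      · exact Or.inl (by linear_combination hd - y.val.2 * hx1 + y.val.1 * hx2)
      · exact Or.inr (by linear_combination hd - y.val.2 * hx1 + y.val.1 * hx2)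
      · exact Or.inr (by linear_combination -hd + y.val.2 * hx1 - y.val.1 * hx2)
      · exact Or.inl (by linear_combination -hd + y.val.2 * hx1 - y.val.1 * hx2)
    have hy2' : y.val.2 = c ∨ y.val.2 = -c := by
      rcases hy2 with h' | h'
      · left; exact mul_left_cancel₀ hI (h'.trans hIc.symm)
      · right
        apply mul_left_cancel₀ hI
        rw [h', mul_neg, hIc]
    rcases hy2' with h' | h'
    · refine ⟨y.val.1, Subtype.ext ?_⟩
      rw [hg]
      show Quotient.mk _ _ = v
      rw [← hy]
      exact Quotient.sound (Or.inl (Prod.ext rfl h'))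
    · refine ⟨-y.val.1, Subtype.ext ?_⟩
      rw [hg]
      show Quotient.mk _ _ = v
      rw [← hy]
      exact Quotient.sound (Or.inr (Prod.ext (neg_neg _).symm h'))
  exact ⟨Equiv.ofBijective g ⟨hinj, hsurj⟩, fun μ => rfl⟩

/-- For distinct wheels `W_i`, `W_j` of `Π_p` (`1 ≤ i, j ≤ (p-1)/2`, `i ≠ j`), there is
a bijection `Φ` from the neighbours of `[i,0]` to the neighbours of `[j,0]` such that
`v` is adjacent to `Φ(v)` for every neighbour `v` of `[i,0]`. -/
theorem platonic_wheel_matching (p : ℕ) (hp : p.Prime) (hodd : Odd p) [NeZero p]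
    (i j : ℕ) (hi1 : 1 ≤ i) (hi2 : i ≤ (p - 1) / 2)
    (hj1 : 1 ≤ j) (hj2 : j ≤ (p - 1) / 2) (hij : i ≠ j)
    (ai aj : PlatonicVertex p)
    (hai : ∃ x : PlatonicPair p, ⟦x⟧ = ai ∧ x.val = ((i : ZMod p), 0))
    (haj : ∃ x : PlatonicPair p, ⟦x⟧ = aj ∧ x.val = ((j : ZMod p), 0)) :
    ∃ Φ : (Platonic p).neighborSet ai ≃ (Platonic p).neighborSet aj,
      ∀ v : (Platonic p).neighborSet ai, (Platonic p).Adj v.val (Φ v).val := by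
  haveI : Fact p.Prime := ⟨hp⟩
  have hodd' := hodd
  obtain ⟨k, hk⟩ := hodd' 
  have hip : i < p := by omega
  have hjp : j < p := by omega
  have hI : ((i : ZMod p)) ≠ 0 := by
    intro h
    have := (ZMod.natCast_eq_zero_iff i p).mp h
    have := Nat.eq_zero_of_dvd_of_lt this hip
    omega
  have hJ : ((j : ZMod p)) ≠ 0 := by
    intro h
    have := (ZMod.natCast_eq_zero_iff j p).mp h
    have := Nat.eq_zero_of_dvd_of_lt this hjp
    omega
  have hIJ : ((i : ZMod p)) ≠ (j : ZMod p) := by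
    intro h
    apply hij
    have := congrArg ZMod.val h
    rwa [ZMod.val_cast_of_lt hip, ZMod.val_cast_of_lt hjp] at this
  have hIJ' : ((i : ZMod p)) ≠ -(j : ZMod p) := by
    intro h
    have h' : ((i + j : ℕ) : ZMod p) = 0 := by push_cast; linear_combination h
    have := (ZMod.natCast_eq_zero_iff (i + j) p).mp h'
    have := Nat.eq_zero_of_dvd_of_lt this (by omega)
    omega
  set I : ZMod p := (i : ZMod p)
  set J : ZMod p := (j : ZMod p)
  have hci : I⁻¹ ≠ 0 := inv_ne_zero hI
  have hcj : J⁻¹ ≠ 0 := inv_ne_zero hJ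
  have hIci : I * I⁻¹ = 1 := mul_inv_cancel₀ hI
  have hJcj : J * J⁻¹ = 1 := mul_inv_cancel₀ hJ
  have hai' : ⟦(⟨(I, 0), pair_gcd p hp I 0 (Or.inl hI)⟩ : PlatonicPair p)⟧ = ai := by
    obtain ⟨x, hx, hxval⟩ := hai
    rw [← hx]
    exact Quotient.sound (Or.inl hxval)
  have haj' : ⟦(⟨(J, 0), pair_gcd p hp J 0 (Or.inl hJ)⟩ : PlatonicPair p)⟧ = aj := by
    obtain ⟨x, hx, hxval⟩ := haj
    rw [← hx]
    exact Quotient.sound (Or.inl hxval)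
  obtain ⟨ei, hei⟩ := wheel_equiv p hp hodd I I⁻¹ hI hci hIci ai hai'
  obtain ⟨ej, hej⟩ := wheel_equiv p hp hodd J J⁻¹ hJ hcj hJcj aj haj'
  have hmul : I * J⁻¹ ≠ 0 := mul_ne_zero hI hcj
  set aff : ZMod p ≃ ZMod p := (Equiv.mulLeft₀ (I * J⁻¹) hmul).trans (Equiv.addLeft I)
    with haff
  refine ⟨ei.symm.trans (aff.trans ej), fun v => ?_⟩
  set μ : ZMod p := ei.symm v with hμ
  have hv : v = ei μ := (ei.apply_symm_apply v).symm
  have hvval : v.val = ⟦(⟨(μ, I⁻¹), pair_gcd p hp μ I⁻¹ (Or.inr hci)⟩ : PlatonicPair p)⟧ := by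
    rw [hv, hei]
  have haffμ : aff μ = I + I * J⁻¹ * μ := rfl
  have hΦval : ((ei.symm.trans (aff.trans ej)) v).val =
      ⟦(⟨(I + I * J⁻¹ * μ, J⁻¹),
        pair_gcd p hp (I + I * J⁻¹ * μ) J⁻¹ (Or.inr hcj)⟩ : PlatonicPair p)⟧ := by
    show (ej (aff (ei.symm v))).val = _
    rw [← hμ, hej, haffμ]
  rw [hvval, hΦval]
  show _ ≠ _ ∧ _
  refine ⟨?_, ⟨(μ, I⁻¹), pair_gcd p hp μ I⁻¹ (Or.inr hci)⟩,
    ⟨(I + I * J⁻¹ * μ, J⁻¹), pair_gcd p hp (I + I * J⁻¹ * μ) J⁻¹ (Or.inr hcj)⟩,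
    rfl, rfl, Or.inr (by
      show μ * J⁻¹ - I⁻¹ * (I + I * J⁻¹ * μ) = -1
      field_simp
      ring)⟩
  intro h
  rcases Quotient.exact h with h' | h'
  · have h2 : J⁻¹ = I⁻¹ := congrArg Prod.snd h'
    exact hIJ (inv_injective h2.symm)
  · have h2 : J⁻¹ = -I⁻¹ := by simpa using congrArg Prod.snd h'
    apply hIJ'
    rw [← inv_neg] at h2
    have := inv_injective h2
    rw [this, neg_neg]
end

section
/- Let p be an odd prime. Then every vertex [ν,ω] of Π_p with ω ≠ 0 is adjacent to exactly one vertex of the principal axis A_princ = {[i,0] : 1 ≤ i ≤ (p−1)/2}. Consequently, the vertex set of Π_p is partitioned into the (p−1)/2 wheels W_i = {[i,0]} ∪ ∂W_i, each containing p+1 vertices. -/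
section Aux
variable {p : ℕ}

lemma plat_quot_eq_iff (x y : PlatonicPair p) :
    (⟦x⟧ : PlatonicVertex p) = ⟦y⟧ ↔ y.val = x.val ∨ y.val = -x.val :=
  Quotient.eq

lemma gcd_cond (hp : p.Prime) [NeZero p] {a b : ZMod p} (h : ¬(a = 0 ∧ b = 0)) :
    Nat.gcd (Nat.gcd a.val b.val) p = 1 := by
  rw [Nat.gcd_comm]
  refine (Nat.Prime.coprime_iff_not_dvd hp).mpr ?_
  intro hd
  exact h ⟨(ZMod.val_eq_zero a).mp
      (Nat.eq_zero_of_dvd_of_lt (hd.trans (Nat.gcd_dvd_left _ _)) (ZMod.val_lt a)),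
    (ZMod.val_eq_zero b).mp
      (Nat.eq_zero_of_dvd_of_lt (hd.trans (Nat.gcd_dvd_right _ _)) (ZMod.val_lt b))⟩

lemma pair_ne (hp : p.Prime) (x : PlatonicPair p) :
    ¬(x.val.1 = 0 ∧ x.val.2 = 0) := by
  rintro ⟨h1, h2⟩
  have := x.prop
  rw [h1, h2] at this
  simp [ZMod.val_zero] at this
  exact hp.one_lt.ne' this

lemma det_cases (x x' y y' : PlatonicPair p)
    (hx : x.val = x'.val ∨ x.val = -x'.val)
    (hy : y.val = y'.val ∨ y.val = -y'.val)
    (h : x.val.1 * y.val.2 - x.val.2 * y.val.1 = 1 ∨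
         x.val.1 * y.val.2 - x.val.2 * y.val.1 = -1) :
    x'.val.1 * y'.val.2 - x'.val.2 * y'.val.1 = 1 ∨
    x'.val.1 * y'.val.2 - x'.val.2 * y'.val.1 = -1 := by
  rcases hx with hx | hx <;> rcases hy with hy | hy <;>
      rw [hx, hy] at h <;>
      (try simp only [Prod.fst_neg, Prod.snd_neg] at h) <;>
      rcases h with h | h <;>
      first
        | exact Or.inl (by linear_combination h)
        | exact Or.inr (by linear_combination h)
        | exact Or.inl (by linear_combination -h)
        | exact Or.inr (by linear_combination -h)

lemma adj_iff (x y : PlatonicPair p) :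
    (Platonic p).Adj ⟦x⟧ ⟦y⟧ ↔ (⟦x⟧ : PlatonicVertex p) ≠ ⟦y⟧ ∧
      (x.val.1 * y.val.2 - x.val.2 * y.val.1 = 1 ∨
       x.val.1 * y.val.2 - x.val.2 * y.val.1 = -1) := by
  constructor
  · rintro ⟨hne, x', y', hx', hy', h⟩
    exact ⟨hne, det_cases x' x y' y (Quotient.exact hx'.symm) (Quotient.exact hy'.symm) h⟩
  · rintro ⟨hne, h⟩
    exact ⟨hne, x, y, rfl, rfl, h⟩

end Aux

lemma part1 {p : ℕ} (hp : p.Prime) [NeZero p] (v : PlatonicVertex p) (hv : secondNZ p v) :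
    ∃! a : PlatonicVertex p,
      (∃ x : PlatonicPair p, ⟦x⟧ = a ∧ x.val.2 = 0) ∧ (Platonic p).Adj v a := by
  haveI := Fact.mk hp
  obtain ⟨x, hx⟩ := Quotient.exists_rep v
  have hω : x.val.2 ≠ 0 := hv x hx
  have hωinv : (x.val.2)⁻¹ ≠ 0 := inv_ne_zero hω
  refine ⟨⟦(⟨((x.val.2)⁻¹, 0), gcd_cond hp (by simp [hωinv])⟩ : PlatonicPair p)⟧,
    ⟨⟨_, rfl, rfl⟩, ?_⟩, ?_⟩
  · rw [← hx, adj_iff]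
    constructor
    · intro hq
      rw [plat_quot_eq_iff] at hq
      rcases hq with h | h
      · exact hω (by simpa using (congrArg Prod.snd h).symm)
      · exact hω (by simpa using (congrArg Prod.snd h).symm)
    · right
      show x.val.1 * 0 - x.val.2 * (x.val.2)⁻¹ = -1
      rw [mul_inv_cancel₀ hω]; ring
  · rintro a' ⟨⟨y', hy', hy'2⟩, hadj⟩
    rw [← hy', ← hx, adj_iff] at hadj
    rw [← hy']
    obtain ⟨-, hdet | hdet⟩ := hadj <;> rw [hy'2] at hdet <;>
      refine Quotient.sound ?_
    · right
      refine Prod.ext ?_ (by simp [hy'2])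
      show (x.val.2)⁻¹ = -y'.val.1
      field_simp
      linear_combination -hdet
    · left
      refine Prod.ext ?_ (by simp [hy'2])
      show (x.val.2)⁻¹ = y'.val.1
      field_simp
      linear_combination hdet

lemma part2 {p : ℕ} (hp : p.Prime) (hodd : Odd p) [NeZero p] :
    (Finset.univ.filter
      (fun a : PlatonicVertex p => ∃ x : PlatonicPair p, ⟦x⟧ = a ∧ x.val.2 = 0)).card
        = (p - 1) / 2 := by
  haveI := Fact.mk hp
  obtain ⟨k, hk⟩ := hodd
  have hp1 : 1 < p := hp.one_lt
  have hk2 : (p - 1) / 2 = k := by omega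
  rw [hk2]
  refine Finset.card_eq_of_bijective
    (fun i hi => ⟦(⟨(((i+1 : ℕ) : ZMod p), 0), gcd_cond hp (by
        rintro ⟨h, -⟩
        have hd := (ZMod.natCast_eq_zero_iff (i+1) p).mp h
        have := Nat.le_of_dvd (by omega) hd
        omega)⟩ : PlatonicPair p)⟧) ?_ ?_ ?_
  · intro a ha
    simp only [Finset.mem_filter] at ha
    obtain ⟨-, x, hx, hx2⟩ := ha
    have hc : x.val.1 ≠ 0 := fun h => pair_ne hp x ⟨h, hx2⟩
    have hm0 : x.val.1.val ≠ 0 := fun h => hc ((ZMod.val_eq_zero _).mp h)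
    have hmlt : x.val.1.val < p := ZMod.val_lt _
    have hvc : ((x.val.1.val : ℕ) : ZMod p) = x.val.1 := by
      simp [ZMod.natCast_val, ZMod.cast_id]
    by_cases hm : x.val.1.val ≤ k
    · refine ⟨x.val.1.val - 1, by omega, ?_⟩
      rw [← hx]
      apply Quotient.sound
      left
      refine Prod.ext ?_ hx2
      show x.val.1 = ((x.val.1.val - 1 + 1 : ℕ) : ZMod p)
      rw [show x.val.1.val - 1 + 1 = x.val.1.val by omega, hvc]
    · refine ⟨p - x.val.1.val - 1, by omega, ?_⟩
      rw [← hx]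
      apply Quotient.sound
      right
      have hcast : ((p - x.val.1.val - 1 + 1 : ℕ) : ZMod p) = -x.val.1 := by
        rw [show p - x.val.1.val - 1 + 1 = p - x.val.1.val by omega,
          Nat.cast_sub hmlt.le, hvc, ZMod.natCast_self, zero_sub]
      refine Prod.ext ?_ (by simp [hx2])
      show x.val.1 = -((p - x.val.1.val - 1 + 1 : ℕ) : ZMod p)
      rw [hcast, neg_neg]
  · intro i hi
    simp only [Finset.mem_filter]
    exact ⟨Finset.mem_univ _, _, rfl, rfl⟩
  · intro i j hi hj h
    have h' := Quotient.exact h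
    rcases h' with h' | h'
    · have hf := congrArg Prod.fst h'
      simp only at hf
      have := congrArg ZMod.val hf
      rw [ZMod.val_cast_of_lt (by omega : j + 1 < p),
        ZMod.val_cast_of_lt (by omega : i + 1 < p)] at this
      omega
    · have hf := congrArg Prod.fst h'
      simp only [Prod.fst_neg] at hf
      have hz : (((i+1) + (j+1) : ℕ) : ZMod p) = 0 := by
        rw [Nat.cast_add, hf]
        ring
      have hd := (ZMod.natCast_eq_zero_iff _ p).mp hz
      have := Nat.le_of_dvd (by omega) hd
      omega

lemma part3 {p : ℕ} (hp : p.Prime) (hodd : Odd p) [NeZero p]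
    (a : PlatonicVertex p) (ha : ∃ x : PlatonicPair p, ⟦x⟧ = a ∧ x.val.2 = 0) :
    (insert a ((Platonic p).neighborFinset a)).card = p + 1 := by
  haveI := Fact.mk hp
  obtain ⟨y, hy, hy2⟩ := ha
  have hc : y.val.1 ≠ 0 := fun h => pair_ne hp y ⟨h, hy2⟩
  have hcinv : (y.val.1)⁻¹ ≠ 0 := inv_ne_zero hc
  have h2 : (2 : ZMod p) ≠ 0 := by
    intro h
    have h' : ((2:ℕ) : ZMod p) = 0 := by exact_mod_cast h
    have hd := (ZMod.natCast_eq_zero_iff 2 p).mp h'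
    have hle := Nat.le_of_dvd two_pos hd
    have h2le := hp.two_le
    obtain ⟨k, hk⟩ := hodd
    omega
  have hnotmem : a ∉ (Platonic p).neighborFinset a := by
    simp [SimpleGraph.mem_neighborFinset]
  rw [Finset.card_insert_of_notMem hnotmem]
  have hcard : ((Platonic p).neighborFinset a).card = p := by
    refine Finset.card_eq_of_bijective
      (fun i _ => ⟦(⟨((i : ZMod p), (y.val.1)⁻¹),
        gcd_cond hp (by rintro ⟨-, h⟩; exact hcinv h)⟩ : PlatonicPair p)⟧) ?_ ?_ ?_
    · intro b hb
      rw [SimpleGraph.mem_neighborFinset] at hb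
      obtain ⟨z, hz⟩ := Quotient.exists_rep b
      rw [← hy, ← hz, adj_iff] at hb
      obtain ⟨-, hdet | hdet⟩ := hb <;> rw [hy2] at hdet
      · have hz2 : z.val.2 = (y.val.1)⁻¹ := by
          field_simp
          linear_combination hdet
        refine ⟨z.val.1.val, ZMod.val_lt _, ?_⟩
        rw [← hz]
        apply Quotient.sound
        left
        refine Prod.ext ?_ hz2
        show z.val.1 = ((z.val.1.val : ℕ) : ZMod p)
        simp [ZMod.natCast_val, ZMod.cast_id]
      · have hz2 : z.val.2 = -(y.val.1)⁻¹ := by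
          field_simp
          linear_combination hdet
        refine ⟨(-z.val.1).val, ZMod.val_lt _, ?_⟩
        rw [← hz]
        apply Quotient.sound
        right
        have hv : (((-z.val.1).val : ℕ) : ZMod p) = -z.val.1 := by
          simp [ZMod.natCast_val, ZMod.cast_id]
        refine Prod.ext ?_ (by simp [hz2])
        show z.val.1 = -(((-z.val.1).val : ℕ) : ZMod p)
        rw [hv, neg_neg]
    · intro i hi
      rw [SimpleGraph.mem_neighborFinset, ← hy, adj_iff]
      constructor
      · intro hq
        rw [plat_quot_eq_iff] at hq
        rcases hq with h | h
        · exact hcinv (by simpa [hy2] using congrArg Prod.snd h)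
        · exact hcinv (by simpa [hy2] using congrArg Prod.snd h)
      · left
        show y.val.1 * (y.val.1)⁻¹ - y.val.2 * (i : ZMod p) = 1
        rw [mul_inv_cancel₀ hc, hy2]
        ring
    · intro i j hi hj h
      have h' := Quotient.exact h
      rcases h' with h' | h'
      · have hf := congrArg Prod.fst h'
        simp only at hf
        have := congrArg ZMod.val hf
        rw [ZMod.val_cast_of_lt hj, ZMod.val_cast_of_lt hi] at this
        omega
      · have hs := congrArg Prod.snd h'
        simp only [Prod.snd_neg] at hs
        have hz : (2 : ZMod p) * (y.val.1)⁻¹ = 0 := by linear_combination hs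
        rcases mul_eq_zero.mp hz with h'' | h''
        · exact absurd h'' h2
        · exact absurd h'' hcinv
  omega


/-- Every vertex `[ν,ω]` of `Π_p` with `ω ≠ 0` is adjacent to exactly one vertex of
the principal axis `{[i,0]}`.  Consequently, the vertex set of `Π_p` is partitioned
into the `(p-1)/2` wheels `W_i = {[i,0]} ∪ ∂W_i`, each containing `p+1` vertices. -/
theorem platonic_wheel_partition (p : ℕ) (hp : p.Prime) (hodd : Odd p) [NeZero p] :
    (∀ v : PlatonicVertex p, secondNZ p v →
      ∃! a : PlatonicVertex p,
        (∃ x : PlatonicPair p, ⟦x⟧ = a ∧ x.val.2 = 0) ∧ (Platonic p).Adj v a) ∧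
    (Finset.univ.filter
      (fun a : PlatonicVertex p => ∃ x : PlatonicPair p, ⟦x⟧ = a ∧ x.val.2 = 0)).card
        = (p - 1) / 2 ∧
    ∀ a : PlatonicVertex p, (∃ x : PlatonicPair p, ⟦x⟧ = a ∧ x.val.2 = 0) →
      (insert a ((Platonic p).neighborFinset a)).card = p + 1 := by
  exact ⟨fun v hv => part1 hp v hv, part2 hp hodd, fun a ha => part3 hp hodd a ha⟩
end

section
/- Let p be an odd prime and 1 ≤ i ≤ (p−1)/2. Then any two distinct vertices of Π_p' lying in the same wheel boundary ∂W_i have a common neighbour in Π_p'; explicitly, for distinct [μ, i⁻¹], [ν, i⁻¹] ∈ ∂W_i, the vertex [2(μ−ν)⁻¹μi − i, 2(μ−ν)⁻¹] is adjacent in Π_p' to both of them. -/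
/-- Two distinct vertices `[μ,i⁻¹]`, `[ν,i⁻¹]` of the same wheel boundary `∂W_i` of
`Π_p'` have a common neighbour in `Π_p'`: explicitly, the vertex
`[2(μ-ν)⁻¹μi - i, 2(μ-ν)⁻¹]` is adjacent to both, and it lies in `Π_p'`. -/
theorem modPlatonic_common_neighbour (p : ℕ) (hp : p.Prime) (hodd : Odd p) [NeZero p]
    (i : ℕ) (hi1 : 1 ≤ i) (hi2 : i ≤ (p - 1) / 2)
    (μ ν : ZMod p) (v w u : PlatonicVertex p)
    (hv : ∃ x : PlatonicPair p, ⟦x⟧ = v ∧ x.val = (μ, ((i : ZMod p))⁻¹))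
    (hw : ∃ x : PlatonicPair p, ⟦x⟧ = w ∧ x.val = (ν, ((i : ZMod p))⁻¹))
    (hu : ∃ x : PlatonicPair p, ⟦x⟧ = u ∧
      x.val = (2 * (μ - ν)⁻¹ * μ * (i : ZMod p) - (i : ZMod p), 2 * (μ - ν)⁻¹))
    (hvw : v ≠ w) :
    (Platonic p).Adj u v ∧ (Platonic p).Adj u w ∧ secondNZ p u := by
  haveI := Fact.mk hp
  obtain ⟨xv, hxv, hxvval⟩ := hv
  obtain ⟨xw, hxw, hxwval⟩ := hw
  obtain ⟨xu, hxu, hxuval⟩ := hu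
  have hplt : i < p := by have := hp.two_le; omega
  have hi : (i : ZMod p) ≠ 0 := by
    intro h
    rw [ZMod.natCast_eq_zero_iff] at h
    exact absurd (Nat.le_of_dvd (by omega) h) (by omega)
  have h2 : (2 : ZMod p) ≠ 0 := by
    intro h
    have h' : ((2:ℕ) : ZMod p) = 0 := by exact_mod_cast h
    rw [ZMod.natCast_eq_zero_iff] at h'
    have := (Nat.prime_dvd_prime_iff_eq hp Nat.prime_two).mp h'
    rcases hodd with ⟨k, hk⟩; omega
  have hμν : μ - ν ≠ 0 := by
    intro h
    apply hvw
    rw [← hxv, ← hxw]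
    congr 1
    apply Subtype.ext
    rw [hxvval, hxwval, sub_eq_zero.mp h]
  have hinv : (μ - ν)⁻¹ * (μ - ν) = 1 := inv_mul_cancel₀ hμν
  have hii : ((i : ZMod p))⁻¹ * (i : ZMod p) = 1 := inv_mul_cancel₀ hi
  have huv : u ≠ v := by
    intro h
    rw [← hxu, ← hxv] at h
    rcases Quotient.exact h with h' | h'
    · rw [hxvval, hxuval] at h'
      have h1 := congrArg Prod.fst h'
      have h2' := congrArg Prod.snd h'
      simp only [] at h1 h2'
      exact hi (by linear_combination h1 - μ * (i : ZMod p) * h2' + μ * hii)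
    · rw [hxvval, hxuval] at h'
      have h1 := congrArg Prod.fst h'
      have h2' := congrArg Prod.snd h'
      simp only [Prod.fst_neg, Prod.snd_neg] at h1 h2'
      exact hi (by linear_combination -h1 + μ * (i : ZMod p) * h2' - μ * hii)
  have huw : u ≠ w := by
    intro h
    rw [← hxu, ← hxw] at h
    rcases Quotient.exact h with h' | h'
    · rw [hxwval, hxuval] at h'
      have h1 := congrArg Prod.fst h'
      have h2' := congrArg Prod.snd h'
      simp only [] at h1 h2'
      exact hi (by linear_combination (-2 * (μ - ν)⁻¹ * (i : ZMod p)) * h1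
        + (2 * (μ - ν)⁻¹ * μ * (i : ZMod p) ^ 2 - (i : ZMod p) ^ 2) * h2'
        + ((i : ZMod p) - 2 * (μ - ν)⁻¹ * μ * (i : ZMod p)) * hii
        - 2 * (i : ZMod p) * hinv)
    · rw [hxwval, hxuval] at h'
      have h1 := congrArg Prod.fst h'
      have h2' := congrArg Prod.snd h'
      simp only [Prod.fst_neg, Prod.snd_neg] at h1 h2'
      exact hi (by linear_combination (-2 * (μ - ν)⁻¹ * (i : ZMod p)) * h1
        + (2 * (μ - ν)⁻¹ * μ * (i : ZMod p) ^ 2 - (i : ZMod p) ^ 2) * h2'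
        + ((i : ZMod p) - 2 * (μ - ν)⁻¹ * μ * (i : ZMod p)) * hii
        - 2 * (i : ZMod p) * hinv)
  refine ⟨⟨huv, xu, xv, hxu, hxv, Or.inr ?_⟩, ⟨huw, xu, xw, hxu, hxw, Or.inl ?_⟩, ?_⟩
  · rw [hxuval, hxvval]
    show (2 * (μ - ν)⁻¹ * μ * (i : ZMod p) - (i : ZMod p)) * ((i : ZMod p))⁻¹
        - 2 * (μ - ν)⁻¹ * μ = -1
    linear_combination (2 * (μ - ν)⁻¹ * μ - 1) * hii
  · rw [hxuval, hxwval]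
    show (2 * (μ - ν)⁻¹ * μ * (i : ZMod p) - (i : ZMod p)) * ((i : ZMod p))⁻¹
        - 2 * (μ - ν)⁻¹ * ν = 1
    linear_combination (2 * (μ - ν)⁻¹ * μ - 1) * hii + 2 * hinv
  · intro x hx
    rw [← hxu] at hx
    have h2d : 2 * (μ - ν)⁻¹ ≠ 0 := mul_ne_zero h2 (inv_ne_zero hμν)
    rcases Quotient.exact hx with h' | h'
    · rw [hxuval] at h'
      have := congrArg Prod.snd h'
      simp only [] at this
      exact fun hz => h2d (this.trans hz)
    · rw [hxuval] at h'
      have := congrArg Prod.snd h'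
      simp only [Prod.snd_neg] at this
      intro hz
      apply h2d
      rw [this, hz, neg_zero]
end

section
/- For an integer N ≥ 3, let V_N and E_N denote the number of vertices and edges of the Platonic graph Π_N, and let g_N = 1 + E_N/6 − V_N/2 be the genus of the compact surface S(Π_N) triangulated by Π_N (computed via the Euler formula, since Π_N triangulates S(Π_N) with 2·E_N/3 triangular faces). Then the ratio 6·g_N / E_N tends to 1 as N tends to infinity. -/
lemma platonic_bezout {N : ℕ} [NeZero N] (x : PlatonicPair N) :
    ∃ a b : ZMod N, a * x.val.1 + b * x.val.2 = 1 := by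
  obtain ⟨⟨l, m⟩, h⟩ := x
  simp only at h ⊢
  have h1 := Nat.gcd_eq_gcd_ab l.val m.val
  have h2 := Nat.gcd_eq_gcd_ab (Nat.gcd l.val m.val) N
  rw [h] at h2
  refine ⟨((Nat.gcdA (Nat.gcd l.val m.val) N : ℤ) * Nat.gcdA l.val m.val : ℤ),
    ((Nat.gcdA (Nat.gcd l.val m.val) N : ℤ) * Nat.gcdB l.val m.val : ℤ), ?_⟩
  have hl : ((l.val : ℕ) : ZMod N) = l := by rw [ZMod.natCast_val, ZMod.cast_id]
  have hm : ((m.val : ℕ) : ZMod N) = m := by rw [ZMod.natCast_val, ZMod.cast_id]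
  have hN : ((N : ℕ) : ZMod N) = 0 := ZMod.natCast_self N
  have := congrArg (fun z : ℤ => (z : ZMod N)) h2
  rw [h1] at this
  push_cast at this
  rw [hl, hm, hN] at this
  push_cast
  linear_combination -this

/-- The solution set to `λω - μν = 1`. -/
def SolSet {N : ℕ} (x : PlatonicPair N) : Type :=
  {p : ZMod N × ZMod N // x.val.1 * p.2 - x.val.2 * p.1 = 1}

lemma card_solSet {N : ℕ} [NeZero N] (x : PlatonicPair N) :
    Nat.card (SolSet x) = N := by
  obtain ⟨a, b, hab⟩ := platonic_bezout x
  set l := x.val.1 with hl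
  set m := x.val.2 with hm
  have hdet0 : l * a - m * (-b) = 1 := by linear_combination hab
  let f : ZMod N → SolSet x := fun t =>
    ⟨(-b + t * l, a + t * m), by simp only; linear_combination hab⟩
  have hinj : Function.Injective f := by
    intro t t' h
    have h1 : -b + t * l = -b + t' * l := congrArg (fun p => p.val.1) h
    have h2 : a + t * m = a + t' * m := congrArg (fun p => p.val.2) h
    have : (t - t') * (a * l + b * m) = 0 := by linear_combination b * h2 + a * h1
    rw [hab, mul_one] at this
    simpa [sub_eq_zero] using this
  have hsurj : Function.Surjective f := by
    rintro ⟨⟨v, w⟩, hp⟩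
    refine ⟨a * (v + b) + b * (w - a), ?_⟩
    apply Subtype.ext
    simp only [f]
    refine Prod.ext ?_ ?_
    · simp only; linear_combination v * hab + b * hp
    · simp only; linear_combination w * hab - a * hp
  rw [Nat.card_congr (Equiv.ofBijective f ⟨hinj, hsurj⟩).symm, Nat.card_eq_fintype_card,
    ZMod.card]

lemma sol_gcd {N : ℕ} [NeZero N] (x : PlatonicPair N) (p : ZMod N × ZMod N)
    (hp : x.val.1 * p.2 - x.val.2 * p.1 = 1) :
    Nat.gcd (Nat.gcd p.1.val p.2.val) N = 1 := by
  set d := Nat.gcd (Nat.gcd p.1.val p.2.val) N with hd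
  have hd1 : d ∣ p.1.val := (Nat.gcd_dvd_left _ _).trans (Nat.gcd_dvd_left _ _)
  have hd2 : d ∣ p.2.val := (Nat.gcd_dvd_left _ _).trans (Nat.gcd_dvd_right _ _)
  have hdN : d ∣ N := Nat.gcd_dvd_right _ _
  set z : ℤ := (x.val.1.val : ℤ) * p.2.val - (x.val.2.val : ℤ) * p.1.val - 1 with hz
  have hcast : ((z : ℤ) : ZMod N) = 0 := by
    rw [hz]
    push_cast [ZMod.natCast_val, ZMod.cast_id]
    linear_combination hp
  have hNz : (N : ℤ) ∣ z := (ZMod.intCast_zmod_eq_zero_iff_dvd z N).mp hcast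
  have hdz : (d : ℤ) ∣ z := (Int.natCast_dvd_natCast.mpr hdN).trans hNz
  have hdterm : (d : ℤ) ∣ (x.val.1.val : ℤ) * p.2.val - (x.val.2.val : ℤ) * p.1.val :=
    dvd_sub (Dvd.dvd.mul_left (Int.natCast_dvd_natCast.mpr hd2) _)
      (Dvd.dvd.mul_left (Int.natCast_dvd_natCast.mpr hd1) _)
  have : (d : ℤ) ∣ 1 := by
    have := dvd_sub hdterm hdz
    simpa [hz] using this
  exact Nat.dvd_one.mp (by exact_mod_cast this)

lemma neighbor_equiv {N : ℕ} (hN : 3 ≤ N) (x : PlatonicPair N) :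
    haveI : NeZero N := ⟨by omega⟩
    Nonempty ((Platonic N).neighborSet ⟦x⟧ ≃ SolSet x) := by
  haveI : NeZero N := ⟨by omega⟩
  have h2 : (2 : ZMod N) ≠ 0 := by
    intro h
    have := (ZMod.natCast_eq_zero_iff 2 N).mp (by exact_mod_cast h)
    have := Nat.le_of_dvd (by norm_num) this
    omega
  have h1 : (1 : ZMod N) ≠ 0 := by
    intro h
    have := (ZMod.natCast_eq_zero_iff 1 N).mp (by exact_mod_cast h)
    have := Nat.le_of_dvd (by norm_num) this
    omega
  -- the map from solutions to neighbors
  let g : SolSet x → (Platonic N).neighborSet ⟦x⟧ := fun p =>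
    ⟨⟦⟨p.val, sol_gcd x p.val p.prop⟩⟧, by
      refine ⟨?_, x, ⟨p.val, sol_gcd x p.val p.prop⟩, rfl, rfl, Or.inl p.prop⟩
      intro h
      rcases Quotient.exact h with hc | hc
      · apply h1
        have hp := p.prop
        rw [show (⟨p.val, sol_gcd x p.val p.prop⟩ : PlatonicPair N).val = p.val from rfl] at hc
        rw [hc] at hp
        linear_combination -hp
      · apply h1
        have hp := p.prop
        rw [show (⟨p.val, sol_gcd x p.val p.prop⟩ : PlatonicPair N).val = p.val from rfl] at hc
        have hc1 : p.val.1 = -x.val.1 := by rw [hc]; rfl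
        have hc2 : p.val.2 = -x.val.2 := by rw [hc]; rfl
        rw [hc1, hc2] at hp
        linear_combination -hp⟩
  have hinj : Function.Injective g := by
    intro p q h
    have h' : (⟦⟨p.val, sol_gcd x p.val p.prop⟩⟧ : PlatonicVertex N) = ⟦⟨q.val, sol_gcd x q.val q.prop⟩⟧ :=
      congrArg Subtype.val h
    rcases Quotient.exact h' with hc | hc
    · exact Subtype.ext (show q.val = p.val from hc).symm
    · exfalso
      apply h2
      have hq := q.prop
      have hc' : q.val = -p.val := hc
      have hc1 : q.val.1 = -p.val.1 := by rw [hc']; rfl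
      have hc2 : q.val.2 = -p.val.2 := by rw [hc']; rfl
      rw [hc1, hc2] at hq
      linear_combination -p.prop - hq
  have hsurj : Function.Surjective g := by
    rintro ⟨v, hadj⟩
    obtain ⟨hne, x', y', hx', hy', hdet⟩ := hadj
    have hxx : x.val = x'.val ∨ x.val = -x'.val := Quotient.exact hx'
    have key : ∃ p : ZMod N × ZMod N,
        (x.val.1 * p.2 - x.val.2 * p.1 = 1) ∧ (y'.val = p ∨ y'.val = -p) := by
      rcases hxx with hc | hc <;> rcases hdet with hd | hd
      · exact ⟨y'.val, by rw [hc]; linear_combination hd, Or.inl rfl⟩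
      · refine ⟨-y'.val, ?_, Or.inr (neg_neg _).symm⟩
        have e1 : (-y'.val).1 = -y'.val.1 := rfl
        have e2 : (-y'.val).2 = -y'.val.2 := rfl
        rw [e1, e2, hc]; linear_combination -hd
      · refine ⟨-y'.val, ?_, Or.inr (neg_neg _).symm⟩
        have e1 : (-y'.val).1 = -y'.val.1 := rfl
        have e2 : (-y'.val).2 = -y'.val.2 := rfl
        have hc1 : x.val.1 = -x'.val.1 := by rw [hc]; rfl
        have hc2 : x.val.2 = -x'.val.2 := by rw [hc]; rfl
        rw [e1, e2, hc1, hc2]; linear_combination hd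
      · refine ⟨y'.val, ?_, Or.inl rfl⟩
        have hc1 : x.val.1 = -x'.val.1 := by rw [hc]; rfl
        have hc2 : x.val.2 = -x'.val.2 := by rw [hc]; rfl
        rw [hc1, hc2]; linear_combination -hd
    obtain ⟨p, hp, hyp⟩ := key
    refine ⟨⟨p, hp⟩, Subtype.ext ?_⟩
    show (⟦⟨p, sol_gcd x p hp⟩⟧ : PlatonicVertex N) = v
    rw [← hy']
    exact Quotient.sound hyp
  exact ⟨(Equiv.ofBijective g ⟨hinj, hsurj⟩).symm⟩

lemma platonic_degree {N : ℕ} (hN : 3 ≤ N) (v : PlatonicVertex N) :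
    haveI : NeZero N := ⟨by omega⟩
    (Platonic N).degree v = N := by
  haveI : NeZero N := ⟨by omega⟩
  induction v using Quotient.ind with
  | _ x =>
    rw [← SimpleGraph.card_neighborSet_eq_degree, ← Nat.card_eq_fintype_card,
      Nat.card_congr (Classical.choice (neighbor_equiv hN x)), card_solSet]

lemma platonic_handshake {N : ℕ} (hN : 3 ≤ N) :
    haveI : NeZero N := ⟨by omega⟩
    Nat.card (PlatonicVertex N) * N = 2 * Nat.card (Platonic N).edgeSet := by
  haveI : NeZero N := ⟨by omega⟩
  have h := SimpleGraph.sum_degrees_eq_twice_card_edges (Platonic N)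
  have h2 : ∑ v : PlatonicVertex N, (Platonic N).degree v
      = Fintype.card (PlatonicVertex N) * N := by
    rw [Finset.sum_congr rfl (fun v _ => platonic_degree hN v), Finset.sum_const,
      smul_eq_mul, Finset.card_univ]
  rw [Nat.card_eq_fintype_card, ← h2, h, Nat.card_eq_fintype_card,
    SimpleGraph.edgeFinset_card]

lemma platonic_vertex_card_pos {N : ℕ} (hN : 3 ≤ N) :
    1 ≤ Nat.card (PlatonicVertex N) := by
  haveI : NeZero N := ⟨by omega⟩
  haveI : Fact (1 < N) := ⟨by omega⟩
  have : Nonempty (PlatonicVertex N) := by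
    refine ⟨⟦⟨((0 : ZMod N), (1 : ZMod N)), ?_⟩⟧⟩
    simp [ZMod.val_one, ZMod.val_zero]
  exact Nat.one_le_iff_ne_zero.mpr (Nat.card_pos).ne'

/-- Non-flatness of the triangulations by Platonic graphs: with `V_N`, `E_N` the
numbers of vertices and edges of `Π_N` and `g_N = 1 + E_N/6 - V_N/2` the genus of the
compact surface triangulated by `Π_N`, the ratio `6 g_N / E_N` tends to `1` as
`N → ∞`. -/
theorem platonic_nonflatness :
    Filter.Tendsto
      (fun N : ℕ =>
        6 * (1 + (Nat.card (Platonic N).edgeSet : ℝ) / 6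
              - (Nat.card (PlatonicVertex N) : ℝ) / 2) /
          (Nat.card (Platonic N).edgeSet : ℝ))
      Filter.atTop (nhds 1) := by
  have hElb : ∀ N : ℕ, 3 ≤ N → (N : ℝ) ≤ 2 * (Nat.card (Platonic N).edgeSet : ℝ) := by
    intro N hN
    have h := platonic_handshake hN
    have hV := platonic_vertex_card_pos hN
    have : N ≤ 2 * Nat.card (Platonic N).edgeSet := by nlinarith
    exact_mod_cast this
  have hNpos : ∀ N : ℕ, 3 ≤ N → (0 : ℝ) < (N : ℝ) := by
    intro N hN
    have : 0 < N := by omega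
    exact_mod_cast this
  have hEpos : ∀ N : ℕ, 3 ≤ N → (0 : ℝ) < (Nat.card (Platonic N).edgeSet : ℝ) := by
    intro N hN
    have := hElb N hN
    have := hNpos N hN
    linarith
  have heq : ∀ᶠ N : ℕ in Filter.atTop,
      6 * (1 + (Nat.card (Platonic N).edgeSet : ℝ) / 6 - (Nat.card (PlatonicVertex N) : ℝ) / 2) /
          (Nat.card (Platonic N).edgeSet : ℝ)
        = 1 + 6 / (Nat.card (Platonic N).edgeSet : ℝ) - 6 / (N : ℝ) := by
    filter_upwards [Filter.eventually_ge_atTop 3] with N hN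
    have hVE : (Nat.card (PlatonicVertex N) : ℝ) * N = 2 * (Nat.card (Platonic N).edgeSet : ℝ) := by
      exact_mod_cast platonic_handshake hN
    have hE := hEpos N hN
    have hn := hNpos N hN
    field_simp
    ring_nf
    nlinarith [hVE, hE, hn]
  have h1 : Filter.Tendsto (fun N : ℕ => 6 / (N : ℝ)) Filter.atTop (nhds 0) :=
    tendsto_const_div_atTop_nhds_zero_nat 6
  have h2 : Filter.Tendsto (fun N : ℕ => 6 / (Nat.card (Platonic N).edgeSet : ℝ)) Filter.atTop (nhds 0) := by
    apply squeeze_zero' (g := fun N : ℕ => 12 / (N : ℝ))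
    · filter_upwards [Filter.eventually_ge_atTop 3] with N hN
      positivity
    · filter_upwards [Filter.eventually_ge_atTop 3] with N hN
      rw [div_le_div_iff₀ (hEpos N hN) (hNpos N hN)]
      nlinarith [hElb N hN, hNpos N hN]
    · exact tendsto_const_div_atTop_nhds_zero_nat 12
  have h3 : Filter.Tendsto
      (fun N : ℕ => 1 + 6 / (Nat.card (Platonic N).edgeSet : ℝ) - 6 / (N : ℝ))
      Filter.atTop (nhds 1) := by
    have := (tendsto_const_nhds (x := (1:ℝ)) (f := Filter.atTop (α := ℕ))).add h2 |>.sub h1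
    simpa using this
  exact h3.congr' (Filter.EventuallyEq.symm heq)
end
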